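/- arXiv:2203.01428 — 7 statements merged into one kernel-verified Lean document; each statement's English description precedes it below -/
import Mathlib

section
/- Let unit vectors u_1,...,u_k in R^n and positive reals c_1,...,c_k satisfy ∑_{i=1}^k c_i u_i⊗u_i = I_n, and let L be a proper nonzero linear subspace of R^n. Then ∑_{i : u_i ∈ L} c_i ≤ dim L, with equality if and only if every u_i lies in L ∪ L^⊥. -/
open scoped BigOperators RealInnerProductSpace

/-- The rank-one map `x ↦ ⟪u, x⟫ • u`, i.e. `u ⊗ u` for a unit vector `u`. -/
noncomputable def rankOne {n : ℕ} (u : EuclideanSpace ℝ (Fin n)) :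
    EuclideanSpace ℝ (Fin n) →ₗ[ℝ] EuclideanSpace ℝ (Fin n) :=
  (innerSL ℝ u).toLinearMap.smulRight u

open Classical in
theorem stmt4 {n k : ℕ} (u : Fin k → EuclideanSpace ℝ (Fin n)) (c : Fin k → ℝ)
    (hu : ∀ i, ‖u i‖ = 1) (hc : ∀ i, 0 < c i)
    (hBL : ∑ i, c i • rankOne (u i) = LinearMap.id)
    (L : Submodule ℝ (EuclideanSpace ℝ (Fin n))) (hL0 : L ≠ ⊥) (hLtop : L ≠ ⊤) :
    (∑ i, if u i ∈ L then c i else 0) ≤ (Module.finrank ℝ L : ℝ) ∧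
      ((∑ i, if u i ∈ L then c i else 0) = (Module.finrank ℝ L : ℝ) ↔
        ∀ i, u i ∈ L ∨ u i ∈ Lᗮ) := by
  set t : Fin k → ℝ :=
    fun i => ‖(L.orthogonalProjectionOnto (u i) : EuclideanSpace ℝ (Fin n))‖ ^ 2 with ht
  -- Pythagoras
  have hpy : ∀ i, 1 = t i +
      ‖u i - (L.orthogonalProjectionOnto (u i) : EuclideanSpace ℝ (Fin n))‖ ^ 2 := by
    intro i
    set P : EuclideanSpace ℝ (Fin n) := (L.orthogonalProjectionOnto (u i) : EuclideanSpace ℝ (Fin n))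
    have h1 : u i - P ∈ Lᗮ := Submodule.sub_starProjection_mem_orthogonal (K := L) (u i)
    have horth : ⟪P, u i - P⟫ = 0 :=
      (Submodule.mem_orthogonal _ _).1 h1 _ (Submodule.coe_mem _)
    have h2 : ‖P + (u i - P)‖ ^ 2 = ‖P‖ ^ 2 + 2 * ⟪P, u i - P⟫ + ‖u i - P‖ ^ 2 :=
      norm_add_sq_real P (u i - P)
    rw [add_sub_cancel, horth, hu i] at h2
    simpa using h2
  have htnn : ∀ i, 0 ≤ t i := fun i => sq_nonneg _
  -- membership characterizations
  have hmemL : ∀ i, u i ∈ L ↔ t i = 1 := by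
    intro i
    constructor
    · intro h
      have h2 : (L.orthogonalProjectionOnto (u i) : EuclideanSpace ℝ (Fin n)) = u i :=
        Submodule.starProjection_eq_self_iff.2 h
      simp only [ht]
      rw [h2, hu i]; norm_num
    · intro h
      have h2 := hpy i
      rw [h] at h2
      have h3 : ‖u i - (L.orthogonalProjectionOnto (u i) : EuclideanSpace ℝ (Fin n))‖ ^ 2 = 0 := by
        linarith
      have h4 : u i - (L.orthogonalProjectionOnto (u i) : EuclideanSpace ℝ (Fin n)) = 0 := by
        simpa using pow_eq_zero_iff (n := 2) (by norm_num) |>.1 h3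
      rw [← Submodule.starProjection_eq_self_iff (K := L)]
      rw [sub_eq_zero] at h4
      exact h4.symm
  have hmemLp : ∀ i, u i ∈ Lᗮ ↔ t i = 0 := by
    intro i
    rw [← Submodule.orthogonalProjectionOnto_eq_zero_iff]
    constructor
    · intro h; simp only [ht]; rw [h]; simp
    · intro h
      have h2 : (L.orthogonalProjectionOnto (u i) : EuclideanSpace ℝ (Fin n)) = 0 := by
        have := pow_eq_zero_iff (n := 2) (by norm_num) |>.1 h
        simpa using this
      exact_mod_cast Subtype.ext h2
  -- key identity
  have happ : ∀ x : EuclideanSpace ℝ (Fin n), (∑ i, c i • rankOne (u i)) x = x := by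
    intro x
    rw [hBL]
    rfl
  have hid : ∀ x : EuclideanSpace ℝ (Fin n), ⟪x, x⟫ = ∑ i, c i * ⟪u i, x⟫ ^ 2 := by
    intro x
    have h1 : ⟪x, (∑ i, c i • rankOne (u i)) x⟫ = ∑ i, c i * ⟪u i, x⟫ ^ 2 := by
      rw [LinearMap.sum_apply, inner_sum]
      refine Finset.sum_congr rfl fun i _ => ?_
      show ⟪x, c i • (⟪u i, x⟫ • u i)⟫ = c i * ⟪u i, x⟫ ^ 2
      rw [inner_smul_right, inner_smul_right, real_inner_comm x (u i)]
      ring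
    rw [happ x] at h1
    exact h1
  set b := stdOrthonormalBasis ℝ L with hb
  have hsumj : ∀ i, ∑ j, ⟪u i, (b j : EuclideanSpace ℝ (Fin n))⟫ ^ 2 = t i := by
    intro i
    have h := b.sum_inner_mul_inner (L.orthogonalProjectionOnto (u i))
      (L.orthogonalProjectionOnto (u i))
    have h2 : ∀ j, ⟪L.orthogonalProjectionOnto (u i), b j⟫ * ⟪b j, L.orthogonalProjectionOnto (u i)⟫
        = ⟪u i, (b j : EuclideanSpace ℝ (Fin n))⟫ ^ 2 := by
      intro j
      rw [Submodule.inner_orthogonalProjectionOnto_eq_of_mem_right, Submodule.inner_orthogonalProjectionOnto_eq_of_mem_left,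
        real_inner_comm ((b j : EuclideanSpace ℝ (Fin n))) (u i), sq]
    have h3 : ⟪L.orthogonalProjectionOnto (u i), L.orthogonalProjectionOnto (u i)⟫
        = ⟪(L.orthogonalProjectionOnto (u i) : EuclideanSpace ℝ (Fin n)),
            (L.orthogonalProjectionOnto (u i) : EuclideanSpace ℝ (Fin n))⟫ :=
      Submodule.coe_inner L _ _
    rw [Finset.sum_congr rfl (fun j _ => h2 j), h3, real_inner_self_eq_norm_sq] at h
    exact h
  have key : ∑ i, c i * t i = (Module.finrank ℝ L : ℝ) := by
    have hone : ∀ j : Fin (Module.finrank ℝ L),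
        ⟪(b j : EuclideanSpace ℝ (Fin n)), (b j : EuclideanSpace ℝ (Fin n))⟫ = (1 : ℝ) := by
      intro j
      rw [real_inner_self_eq_norm_sq]
      have : ‖(b j : EuclideanSpace ℝ (Fin n))‖ = ‖b j‖ := rfl
      rw [this, b.orthonormal.1 j]
      norm_num
    calc ∑ i, c i * t i
        = ∑ i, c i * ∑ j, ⟪u i, (b j : EuclideanSpace ℝ (Fin n))⟫ ^ 2 := by
          simp_rw [hsumj]
      _ = ∑ j : Fin (Module.finrank ℝ L), ∑ i, c i * ⟪u i, (b j : EuclideanSpace ℝ (Fin n))⟫ ^ 2 := by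
          simp_rw [Finset.mul_sum]
          rw [Finset.sum_comm]
      _ = ∑ j : Fin (Module.finrank ℝ L),
            ⟪(b j : EuclideanSpace ℝ (Fin n)), (b j : EuclideanSpace ℝ (Fin n))⟫ := by
          exact Finset.sum_congr rfl fun j _ => (hid _).symm
      _ = (Module.finrank ℝ L : ℝ) := by simp only [hone]; simp
  -- termwise inequality
  have hle : ∀ i ∈ Finset.univ, (if u i ∈ L then c i else 0) ≤ c i * t i := by
    intro i _
    by_cases h : u i ∈ L
    · rw [if_pos h, (hmemL i).1 h, mul_one]
    · rw [if_neg h]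
      exact mul_nonneg (hc i).le (htnn i)
  constructor
  · rw [← key]
    exact Finset.sum_le_sum hle
  · rw [← key, Finset.sum_eq_sum_iff_of_le hle]
    constructor
    · intro h i
      by_cases hL : u i ∈ L
      · exact Or.inl hL
      · right
        have h2 := h i (Finset.mem_univ i)
        rw [if_neg hL] at h2
        rw [hmemLp i]
        rcases mul_eq_zero.1 h2.symm with h' | h'
        · exact absurd h' (hc i).ne'
        · exact h'
    · intro h i _
      rcases h i with hL | hLp
      · rw [if_pos hL, (hmemL i).1 hL, mul_one]
      · by_cases hL : u i ∈ L
        · rw [if_pos hL, (hmemL i).1 hL, mul_one]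
        · rw [if_neg hL, (hmemLp i).1 hLp, mul_zero]
end

section
/- Let v_1,...,v_k be nonzero vectors spanning R^n. Define v_i ⋈ v_j if either v_i = v_j or some minimal dependent subset of {v_1,...,v_k} contains both v_i and v_j. Then ⋈ is an equivalence relation on {v_1,...,v_k}, and the linear hulls V_1,...,V_m of the equivalence classes span R^n with V_i ∩ V_j = {0} for i ≠ j. -/
open scoped BigOperators

/-- The index set `S` carries a linearly dependent family of vectors. -/
def DepSet {n k : ℕ} (v : Fin k → EuclideanSpace ℝ (Fin n)) (S : Finset (Fin k)) : Prop :=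
  ¬ LinearIndependent ℝ (fun i : S => v i)

/-- `S` is minimally dependent: dependent, but every proper subset is independent. -/
def MinDep {n k : ℕ} (v : Fin k → EuclideanSpace ℝ (Fin n)) (S : Finset (Fin k)) : Prop :=
  DepSet v S ∧ ∀ T ⊂ S, ¬ DepSet v T

/-- The relation `v i ⋈ v j`. -/
def Bowtie {n k : ℕ} (v : Fin k → EuclideanSpace ℝ (Fin n)) (i j : Fin k) : Prop :=
  v i = v j ∨ ∃ D : Finset (Fin k), MinDep v D ∧ i ∈ D ∧ j ∈ D

namespace Stmt6Aux

variable {n k : ℕ} (v : Fin k → EuclideanSpace ℝ (Fin n))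

/-- `c` is a linear relation among the `v`'s. -/
def IsRel (c : Fin k → ℝ) : Prop := ∑ a, c a • v a = 0

/-- support of a coefficient function, as a `Finset`. -/
noncomputable def fsupp (c : Fin k → ℝ) : Finset (Fin k) := Finset.univ.filter (fun a => c a ≠ 0)

lemma mem_fsupp {c : Fin k → ℝ} {a : Fin k} : a ∈ fsupp c ↔ c a ≠ 0 := by
  simp [fsupp]

lemma eq_zero_of_fsupp_empty {c : Fin k → ℝ} (h : fsupp c = ∅) : c = 0 := by
  funext a
  by_contra ha
  have : a ∈ fsupp c := mem_fsupp.2 ha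
  simp [h] at this

lemma sum_eq_sum_fsupp {c : Fin k → ℝ} {S : Finset (Fin k)} (h : fsupp c ⊆ S) :
    ∑ a ∈ S, c a • v a = ∑ a, c a • v a := by
  apply Finset.sum_subset (Finset.subset_univ S)
  intro a _ haS
  have : c a = 0 := by
    by_contra hc
    exact haS (h (mem_fsupp.2 hc))
  simp [this]

lemma depSet_iff {S : Finset (Fin k)} :
    DepSet v S ↔ ∃ c : Fin k → ℝ, IsRel v c ∧ fsupp c ⊆ S ∧ c ≠ 0 := by
  unfold DepSet
  rw [Fintype.not_linearIndependent_iff]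
  constructor
  · rintro ⟨g, hg, i, hi⟩
    classical
    refine ⟨fun a => if h : a ∈ S then g ⟨a, h⟩ else 0, ?_, ?_, ?_⟩
    · unfold IsRel
      rw [← sum_eq_sum_fsupp v (S := S)]
      · rw [← hg, ← Finset.sum_coe_sort S (fun a => (if h : a ∈ S then g ⟨a, h⟩ else 0) • v a)]
        apply Finset.sum_congr rfl
        intro x _
        simp [x.2]
      · intro a ha
        rw [mem_fsupp] at ha
        by_contra haS
        simp [haS] at ha
    · intro a ha
      rw [mem_fsupp] at ha
      by_contra haS
      simp [haS] at ha
    · intro h0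
      have := congrFun h0 i
      simp [i.2] at this
      exact hi this
  · rintro ⟨c, hrel, hsupp, hne⟩
    refine ⟨fun i => c i, ?_, ?_⟩
    · rw [Finset.sum_coe_sort S (fun a => c a • v a), sum_eq_sum_fsupp v hsupp]
      exact hrel
    · rcases Function.ne_iff.1 hne with ⟨a, ha⟩
      have haS : a ∈ S := hsupp (mem_fsupp.2 ha)
      exact ⟨⟨a, haS⟩, ha⟩


variable (hv : ∀ i, v i ≠ 0)

lemma not_dep_small (hv : ∀ i, v i ≠ 0) {S : Finset (Fin k)} (hS : S.card ≤ 1) :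
    ¬ DepSet v S := by
  rw [depSet_iff]
  rintro ⟨c, hrel, hsupp, hne⟩
  rcases Function.ne_iff.1 hne with ⟨a, ha⟩
  have haS : a ∈ S := hsupp (mem_fsupp.2 ha)
  have hSa : S = {a} := by
    apply Finset.eq_singleton_iff_unique_mem.2
    exact ⟨haS, fun b hb => Finset.card_le_one.1 hS b hb a haS⟩
  have : ∑ x ∈ S, c x • v x = 0 := by rw [sum_eq_sum_fsupp v hsupp]; exact hrel
  rw [hSa, Finset.sum_singleton] at this
  rcases smul_eq_zero.1 this with h | h
  · exact ha h
  · exact hv a h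

lemma dep_fsupp {c : Fin k → ℝ} (hrel : IsRel v c) (hne : c ≠ 0) : DepSet v (fsupp c) :=
  (depSet_iff v).2 ⟨c, hrel, le_refl _, hne⟩

lemma exists_circuit_subset {S : Finset (Fin k)} (hS : DepSet v S) :
    ∃ C ⊆ S, MinDep v C := by
  induction S using Finset.strongInduction with
  | _ S ih =>
    by_cases h : ∀ T ⊂ S, ¬ DepSet v T
    · exact ⟨S, le_refl _, hS, h⟩
    · push_neg at h
      rcases h with ⟨T, hT, hTd⟩
      rcases ih T hT hTd with ⟨C, hCT, hC⟩
      exact ⟨C, hCT.trans hT.subset, hC⟩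

lemma circuit_rel {C : Finset (Fin k)} (hC : MinDep v C) :
    ∃ c, IsRel v c ∧ fsupp c = C := by
  rcases (depSet_iff v).1 hC.1 with ⟨c, hrel, hsupp, hne⟩
  refine ⟨c, hrel, ?_⟩
  by_contra hne'
  exact hC.2 (fsupp c) (lt_of_le_of_ne hsupp hne') (dep_fsupp v hrel hne)

lemma rel_sub {c d : Fin k → ℝ} (hc : IsRel v c) (hd : IsRel v d) (t : ℝ) :
    IsRel v (fun a => c a - t * d a) := by
  unfold IsRel at *
  simp only [sub_smul, mul_smul, Finset.sum_sub_distrib, ← Finset.smul_sum, hc, hd,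
    smul_zero, sub_zero]

lemma rel_add {c d : Fin k → ℝ} (hc : IsRel v c) (hd : IsRel v d) (t : ℝ) :
    IsRel v (fun a => c a + t * d a) := by
  unfold IsRel at *
  simp only [add_smul, mul_smul, Finset.sum_add_distrib, ← Finset.smul_sum, hc, hd,
    smul_zero, add_zero]

/-- Lemma B: every element of the support of a relation lies in a circuit inside the support. -/
lemma circuit_through (hv : ∀ i, v i ≠ 0) :
    ∀ N (c : Fin k → ℝ), (fsupp c).card ≤ N → IsRel v c → ∀ f, c f ≠ 0 →
    ∃ C, MinDep v C ∧ f ∈ C ∧ C ⊆ fsupp c := by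
  intro N
  induction N with
  | zero =>
    intro c hcard _ f hf
    have : f ∈ fsupp c := mem_fsupp.2 hf
    have := Finset.card_pos.2 ⟨f, this⟩
    omega
  | succ N ih =>
    intro c hcard hrel f hf
    have hfC : f ∈ fsupp c := mem_fsupp.2 hf
    by_cases hmin : MinDep v (fsupp c)
    · exact ⟨fsupp c, hmin, hfC, le_refl _⟩
    · have hdep : DepSet v (fsupp c) := dep_fsupp v hrel (fun h0 => hf (by simp [h0]))
      have : ∃ T ⊂ fsupp c, DepSet v T := by
        by_contra h
        push_neg at h
        exact hmin ⟨hdep, h⟩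
      rcases this with ⟨T, hT, hTd⟩
      rcases (depSet_iff v).1 hTd with ⟨d, hdrel, hdsupp, hdne⟩
      have hdsuppc : fsupp d ⊆ fsupp c := hdsupp.trans hT.subset
      by_cases hdf : d f ≠ 0
      · -- apply ih to d
        have hcard' : (fsupp d).card ≤ N := by
          have h1 : (fsupp d).card ≤ T.card := Finset.card_le_card hdsupp
          have h2 : T.card < (fsupp c).card := Finset.card_lt_card hT
          omega
        rcases ih d hcard' hdrel f hdf with ⟨C, hC, hfC', hCsub⟩
        exact ⟨C, hC, hfC', hCsub.trans hdsuppc⟩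
      · push_neg at hdf
        rcases Function.ne_iff.1 hdne with ⟨s, hs0⟩
        have hs : d s ≠ 0 := by simpa using hs0
        have hsf : s ≠ f := by rintro rfl; exact hs hdf
        set e := fun a => c a - (c s / d s) * d a with he
        have herel : IsRel v e := rel_sub v hrel hdrel _
        have hes : e s = 0 := by
          simp only [he]
          rw [div_mul_cancel₀ _ hs]
          ring
        have hef : e f ≠ 0 := by
          simp only [he, hdf, mul_zero, sub_zero]
          exact hf
        have hesupp : fsupp e ⊆ (fsupp c).erase s := by
          intro a ha
          rw [mem_fsupp] at ha
          rcases eq_or_ne a s with rfl | hne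
          · exact absurd hes ha
          · refine Finset.mem_erase.2 ⟨hne, ?_⟩
            rw [mem_fsupp]
            intro hca
            apply ha
            by_cases hda : d a = 0
            · simp [he, hca, hda]
            · exact absurd (hdsuppc (mem_fsupp.2 hda)) (by rw [mem_fsupp]; simp [hca])
        have hcard' : (fsupp e).card ≤ N := by
          have h1 : (fsupp e).card ≤ ((fsupp c).erase s).card := Finset.card_le_card hesupp
          have h2 : ((fsupp c).erase s).card < (fsupp c).card :=
            Finset.card_erase_lt_of_mem (hdsuppc (mem_fsupp.2 hs))
          omega
        rcases ih e hcard' herel f hef with ⟨C, hC, hfC', hCsub⟩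
        exact ⟨C, hC, hfC', hCsub.trans (hesupp.trans (Finset.erase_subset _ _))⟩


lemma strong_elim (hv : ∀ i, v i ≠ 0) {C1 C2 : Finset (Fin k)}
    (h1 : MinDep v C1) (h2 : MinDep v C2) {e f : Fin k}
    (he1 : e ∈ C1) (he2 : e ∈ C2) (hf1 : f ∈ C1) (hf2 : f ∉ C2) :
    ∃ C3, MinDep v C3 ∧ f ∈ C3 ∧ C3 ⊆ C1 ∪ C2 ∧ e ∉ C3 := by
  rcases circuit_rel v h1 with ⟨c1, hc1rel, hc1⟩
  rcases circuit_rel v h2 with ⟨c2, hc2rel, hc2⟩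
  have hc1e : c1 e ≠ 0 := mem_fsupp.1 (hc1 ▸ he1)
  have hc2e : c2 e ≠ 0 := mem_fsupp.1 (hc2 ▸ he2)
  have hc1f : c1 f ≠ 0 := mem_fsupp.1 (hc1 ▸ hf1)
  have hc2f : c2 f = 0 := by
    by_contra h
    exact hf2 (hc2 ▸ mem_fsupp.2 h)
  set d := fun a => c1 a - (c1 e / c2 e) * c2 a with hd
  have hdrel : IsRel v d := rel_sub v hc1rel hc2rel _
  have hde : d e = 0 := by
    simp only [hd]
    rw [div_mul_cancel₀ _ hc2e]
    ring
  have hdf : d f ≠ 0 := by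
    simp only [hd, hc2f, mul_zero, sub_zero]
    exact hc1f
  have hdsupp : fsupp d ⊆ C1 ∪ C2 := by
    intro a ha
    rw [mem_fsupp] at ha
    by_cases h1a : c1 a = 0
    · by_cases h2a : c2 a = 0
      · exact absurd (by simp [hd, h1a, h2a]) ha
      · exact Finset.mem_union_right _ (hc2 ▸ mem_fsupp.2 h2a)
    · exact Finset.mem_union_left _ (hc1 ▸ mem_fsupp.2 h1a)
  rcases circuit_through v hv (fsupp d).card d (le_refl _) hdrel f hdf with ⟨C3, hC3, hfC3, hC3sub⟩
  refine ⟨C3, hC3, hfC3, hC3sub.trans hdsupp, fun heC3 => ?_⟩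
  exact (mem_fsupp.1 (hC3sub heC3)) hde

lemma connect_aux (hv : ∀ i, v i ≠ 0) :
    ∀ N (C1 C2 : Finset (Fin k)), (C1 ∪ C2).card ≤ N →
    MinDep v C1 → MinDep v C2 →
    ∀ x y z, x ∈ C1 → y ∈ C1 → y ∈ C2 → z ∈ C2 →
    ∃ C, MinDep v C ∧ x ∈ C ∧ z ∈ C := by
  intro N
  induction N with
  | zero =>
    intro C1 C2 hcard _ _ x y z hx _ _ _
    have := Finset.card_pos.2 (⟨x, Finset.mem_union_left C2 hx⟩ : (C1 ∪ C2).Nonempty)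
    omega
  | succ N ih =>
    intro C1 C2 hcard h1 h2 x y z hx hy1 hy2 hz
    by_cases hz1 : z ∈ C1
    · exact ⟨C1, h1, hx, hz1⟩
    by_cases hx2 : x ∈ C2
    · exact ⟨C2, h2, hx2, hz⟩
    -- strong elimination: kill y, keep x
    rcases strong_elim v hv h1 h2 hy1 hy2 hx hx2 with ⟨C3, h3, hxC3, hC3sub, hyC3⟩
    by_cases hzC3 : z ∈ C3
    · exact ⟨C3, h3, hxC3, hzC3⟩
    -- C3 ⊄ C1, so pick u ∈ C3 \ C1 ⊆ C2 \ C1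
    have hC3nsub : ¬ C3 ⊆ C1 := by
      intro hsub
      exact h1.2 C3 ⟨hsub, fun h => hyC3 (h hy1)⟩ h3.1
    rcases Finset.not_subset.1 hC3nsub with ⟨u, huC3, huC1⟩
    have huC2 : u ∈ C2 := by
      rcases Finset.mem_union.1 (hC3sub huC3) with h | h
      · exact absurd h huC1
      · exact h
    by_cases hsmall : (C3 ∪ C2).card < (C1 ∪ C2).card
    · exact ih C3 C2 (by omega) h3 h2 x u z hxC3 huC3 huC2 hz
    -- else C3 ∪ C2 = C1 ∪ C2
    push_neg at hsmall
    have hU : C3 ∪ C2 = C1 ∪ C2 := by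
      apply Finset.eq_of_subset_of_card_le
      · exact Finset.union_subset hC3sub Finset.subset_union_right
      · exact hsmall
    -- second elimination: circuits C2, C3 common u, keep z ∈ C2 \ C3
    rcases strong_elim v hv h2 h3 huC2 huC3 hz hzC3 with ⟨C4, h4, hzC4, hC4sub, huC4⟩
    by_cases hxC4 : x ∈ C4
    · exact ⟨C4, h4, hxC4, hzC4⟩
    have hC4nsub : ¬ C4 ⊆ C2 := by
      intro hsub
      exact h2.2 C4 ⟨hsub, fun h => huC4 (h huC2)⟩ h4.1
    rcases Finset.not_subset.1 hC4nsub with ⟨t, htC4, htC2⟩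
    have htC3 : t ∈ C3 := by
      rcases Finset.mem_union.1 (hC4sub htC4) with h | h
      · exact absurd h htC2
      · exact h
    have htC1 : t ∈ C1 := by
      rcases Finset.mem_union.1 (hC3sub htC3) with h | h
      · exact h
      · exact absurd h htC2
    have hC4subU : C4 ⊆ C1 ∪ C2 := by
      refine hC4sub.trans ?_
      rw [Finset.union_comm C2 C3, hU]
    by_cases hsmall2 : (C1 ∪ C4).card < (C1 ∪ C2).card
    · exact ih C1 C4 (by omega) h1 h4 x t z hx htC1 htC4 hzC4
    push_neg at hsmall2
    have hU2 : C1 ∪ C4 = C1 ∪ C2 := by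
      apply Finset.eq_of_subset_of_card_le
      · exact Finset.union_subset Finset.subset_union_left hC4subU
      · exact hsmall2
    exfalso
    have : u ∈ C1 ∪ C4 := hU2 ▸ Finset.mem_union_right C1 huC2
    rcases Finset.mem_union.1 this with h | h
    · exact huC1 h
    · exact huC4 h


lemma pair_circuit (hv : ∀ i, v i ≠ 0) {i j : Fin k} (hij : i ≠ j) (hvij : v i = v j) :
    MinDep v {i, j} := by
  classical
  constructor
  · rw [depSet_iff]
    refine ⟨fun a => if a = i then 1 else if a = j then -1 else 0, ?_, ?_, ?_⟩
    · unfold IsRel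
      have hsupp : fsupp (fun a => if a = i then (1:ℝ) else if a = j then -1 else 0) ⊆ ({i, j} : Finset (Fin k)) := by
        intro a ha
        rw [mem_fsupp] at ha
        by_cases h1 : a = i
        · simp [h1]
        by_cases h2 : a = j
        · simp [h2]
        · simp [h1, h2] at ha
      rw [← sum_eq_sum_fsupp v hsupp, Finset.sum_pair hij]
      simp [hij, Ne.symm hij, hvij]
    · intro a ha
      rw [mem_fsupp] at ha
      by_cases h1 : a = i
      · simp [h1]
      by_cases h2 : a = j
      · simp [h2]
      · simp [h1, h2] at ha
    · intro h0
      have := congrFun h0 i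
      simp at this
  · intro T hT
    apply not_dep_small v hv
    have h2 : ({i, j} : Finset (Fin k)).card = 2 := Finset.card_pair hij
    have := Finset.card_lt_card hT
    omega

/-- common-circuit form of `Bowtie`. -/
lemma bowtie_iff (hv : ∀ i, v i ≠ 0) {i j : Fin k} :
    Bowtie v i j ↔ i = j ∨ ∃ D, MinDep v D ∧ i ∈ D ∧ j ∈ D := by
  constructor
  · rintro (h | h)
    · rcases eq_or_ne i j with rfl | hne
      · exact Or.inl rfl
      · exact Or.inr ⟨{i, j}, pair_circuit v hv hne h, by simp, by simp⟩
    · exact Or.inr h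
  · rintro (rfl | h)
    · exact Or.inl rfl
    · exact Or.inr h

lemma bowtie_equiv (hv : ∀ i, v i ≠ 0) : Equivalence (Bowtie v) := by
  constructor
  · intro a; exact Or.inl rfl
  · rintro a b (h | ⟨D, hD, ha, hb⟩)
    · exact Or.inl h.symm
    · exact Or.inr ⟨D, hD, hb, ha⟩
  · intro a b c hab hbc
    rw [bowtie_iff v hv] at hab hbc ⊢
    rcases hab with rfl | ⟨D1, hD1, haD1, hbD1⟩
    · exact hbc
    rcases hbc with rfl | ⟨D2, hD2, hbD2, hcD2⟩
    · exact Or.inr ⟨D1, hD1, haD1, hbD1⟩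
    rcases connect_aux v hv (D1 ∪ D2).card D1 D2 (le_refl _) hD1 hD2 a b c haD1 hbD1 hbD2 hcD2
      with ⟨C, hC, haC, hcC⟩
    exact Or.inr ⟨C, hC, haC, hcC⟩


lemma rel_indicator (hv : ∀ i, v i ≠ 0) {A : Set (Fin k)}
    (hA : ∀ C, MinDep v C → ∀ a ∈ C, a ∈ A → ∀ b ∈ C, b ∈ A) :
    ∀ N (c : Fin k → ℝ), (fsupp c).card ≤ N → IsRel v c → IsRel v (A.indicator c) := by
  intro N
  induction N with
  | zero =>
    intro c hcard _
    have hc0 : c = 0 := eq_zero_of_fsupp_empty (Finset.card_eq_zero.1 (Nat.le_zero.1 hcard))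
    subst hc0
    simp [IsRel]
  | succ N ih =>
    intro c hcard hrel
    classical
    by_cases hc0 : c = 0
    · subst hc0; simp [IsRel]
    rcases exists_circuit_subset v (dep_fsupp v hrel hc0) with ⟨C, hCsub, hC⟩
    rcases circuit_rel v hC with ⟨d, hdrel, hdsupp⟩
    have hCne : C.Nonempty := by
      rcases C.eq_empty_or_nonempty with rfl | h
      · exact absurd hC.1 (not_dep_small v hv (by simp))
      · exact h
    rcases hCne with ⟨s, hsC⟩
    have hds : d s ≠ 0 := mem_fsupp.1 (hdsupp ▸ hsC)
    set e := fun a => c a - (c s / d s) * d a with he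
    have herel : IsRel v e := rel_sub v hrel hdrel _
    have hes : e s = 0 := by
      simp only [he]
      rw [div_mul_cancel₀ _ hds]
      ring
    have hesupp : fsupp e ⊆ (fsupp c).erase s := by
      intro a ha
      rw [mem_fsupp] at ha
      rcases eq_or_ne a s with rfl | hne
      · exact absurd hes ha
      · refine Finset.mem_erase.2 ⟨hne, ?_⟩
        rw [mem_fsupp]
        intro hca
        apply ha
        by_cases hda : d a = 0
        · simp [he, hca, hda]
        · exact absurd (hCsub (hdsupp ▸ mem_fsupp.2 hda)) (by rw [mem_fsupp]; simp [hca])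
    have hcard' : (fsupp e).card ≤ N := by
      have h1 : (fsupp e).card ≤ ((fsupp c).erase s).card := Finset.card_le_card hesupp
      have h2 : ((fsupp c).erase s).card < (fsupp c).card :=
        Finset.card_erase_lt_of_mem (hCsub hsC)
      omega
    have hind : IsRel v (A.indicator e) := ih e hcard' herel
    have hdind : IsRel v (A.indicator d) := by
      classical
      by_cases hCA : ∃ a ∈ C, a ∈ A
      · rcases hCA with ⟨a0, ha0C, ha0A⟩
        have : A.indicator d = d := by
          funext a
          rw [Set.indicator_apply]
          split_ifs with h
          · rfl
          · by_contra hda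
            have haC : a ∈ C := hdsupp ▸ mem_fsupp.2 (fun h0 => hda h0.symm)
            exact h (hA C hC a0 ha0C ha0A a haC)
        rw [this]; exact hdrel
      · push_neg at hCA
        have : A.indicator d = 0 := by
          funext a
          rw [Set.indicator_apply]
          split_ifs with h
          · by_contra hda
            exact hCA a (hdsupp ▸ mem_fsupp.2 hda) h
          · rfl
        rw [this]; simp [IsRel]
    have heq : A.indicator c = fun a => A.indicator e a + (c s / d s) * A.indicator d a := by
      funext a
      simp only [Set.indicator_apply, he]
      split_ifs with h
      · ring
      · ring
    rw [heq]
    exact rel_add v hind hdind _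

lemma mem_span_exists {A : Set (Fin k)} {x : EuclideanSpace ℝ (Fin n)}
    (hx : x ∈ Submodule.span ℝ (v '' A)) :
    ∃ c : Fin k → ℝ, (∀ a, a ∉ A → c a = 0) ∧ ∑ a, c a • v a = x := by
  classical
  induction hx using Submodule.span_induction with
  | mem x hx =>
    rcases hx with ⟨a, ha, rfl⟩
    refine ⟨fun b => if b = a then 1 else 0, ?_, ?_⟩
    · intro b hb
      have hba : b ≠ a := fun h => hb (h ▸ ha)
      simp [hba]
    · simp [ite_smul]
  | zero => exact ⟨0, fun a _ => rfl, by simp⟩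
  | add x y hx hy ihx ihy =>
    rcases ihx with ⟨c, hc1, hc2⟩
    rcases ihy with ⟨d, hd1, hd2⟩
    refine ⟨c + d, fun a ha => by simp [hc1 a ha, hd1 a ha], ?_⟩
    simp only [Pi.add_apply, add_smul, Finset.sum_add_distrib, hc2, hd2]
  | smul r x hx ihx =>
    rcases ihx with ⟨c, hc1, hc2⟩
    refine ⟨r • c, fun a ha => by simp [hc1 a ha], ?_⟩
    simp only [Pi.smul_apply, smul_assoc, ← Finset.smul_sum, hc2]

end Stmt6Aux

open Stmt6Aux

theorem stmt6 {n k : ℕ} (v : Fin k → EuclideanSpace ℝ (Fin n))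
    (hv : ∀ i, v i ≠ 0) (hspan : Submodule.span ℝ (Set.range v) = ⊤) :
    Equivalence (Bowtie v) ∧
    (⨆ i : Fin k, Submodule.span ℝ (v '' {j | Bowtie v i j})) = ⊤ ∧
    (∀ i j : Fin k, ¬ Bowtie v i j →
      Submodule.span ℝ (v '' {a | Bowtie v i a}) ⊓
        Submodule.span ℝ (v '' {a | Bowtie v j a}) = ⊥) := by
  have hequiv := bowtie_equiv v hv
  refine ⟨hequiv, ?_, ?_⟩
  · rw [eq_top_iff, ← hspan]
    apply Submodule.span_le.2
    rintro x ⟨i0, rfl⟩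
    have hmem : v i0 ∈ Submodule.span ℝ (v '' {j | Bowtie v i0 j}) :=
      Submodule.subset_span ⟨i0, hequiv.refl i0, rfl⟩
    exact (le_iSup (fun i => Submodule.span ℝ (v '' {j | Bowtie v i j})) i0) hmem
  · intro i j hij
    rw [eq_bot_iff]
    intro x hx
    rw [Submodule.mem_inf] at hx
    obtain ⟨hxA, hxB⟩ := hx
    obtain ⟨c, hc1, hc2⟩ := mem_span_exists v hxA
    obtain ⟨d, hd1, hd2⟩ := mem_span_exists v hxB
    set A : Set (Fin k) := {a | Bowtie v i a} with hAdef
    have hABdisj : ∀ a, a ∈ A → ¬ Bowtie v j a := by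
      intro a haA hBja
      exact hij (hequiv.trans haA (hequiv.symm hBja))
    have hAclosed : ∀ C, MinDep v C → ∀ a ∈ C, a ∈ A → ∀ b ∈ C, b ∈ A := by
      intro C hC a haC haA b hbC
      exact hequiv.trans haA (Or.inr ⟨C, hC, haC, hbC⟩)
    have hrel : IsRel v (fun a => c a - 1 * d a) := by
      unfold IsRel
      simp only [sub_smul, one_mul, Finset.sum_sub_distrib, hc2, hd2, sub_self]
    have hind := rel_indicator v hv hAclosed (fsupp (fun a => c a - 1 * d a)).card
      (fun a => c a - 1 * d a) (le_refl _) hrel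
    have heq : A.indicator (fun a => c a - 1 * d a) = c := by
      classical
      funext a
      rw [Set.indicator_apply]
      split_ifs with h
      · have : d a = 0 := hd1 a (hABdisj a h)
        simp [this]
      · exact (hc1 a h).symm
    rw [heq] at hind
    unfold IsRel at hind
    rw [hc2] at hind
    rw [Submodule.mem_bot]
    exact hind
end

section
/- (Ball–Barthe lemma) Let unit vectors u_1,...,u_k in R^n and positive reals c_1,...,c_k satisfy ∑_{i=1}^k c_i u_i⊗u_i = I_n. Then for all positive reals t_1,...,t_k, det(∑_{i=1}^k c_i t_i u_i⊗u_i) ≥ ∏_{i=1}^k t_i^{c_i}. -/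
open scoped BigOperators
open Matrix Finset

section Aux
variable {n k : ℕ}

instance : DecidablePred (StrictMono : (Fin n → Fin k) → Prop) := fun g =>
  decidable_of_iff (∀ a b : Fin n, a < b → g a < g b) Iff.rfl

/-- determinant of sum of weighted rank-one maps as a matrix determinant -/
lemma det_sum_rankOne (u : Fin k → EuclideanSpace ℝ (Fin n)) (w : Fin k → ℝ) :
    LinearMap.det (∑ i, w i • rankOne (u i))
      = Matrix.det (Matrix.of fun a b : Fin n => ∑ i, w i * (u i a * u i b)) := by
  rw [← LinearMap.det_toMatrix (PiLp.basisFun 2 ℝ (Fin n))]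
  congr 1
  apply Matrix.ext; intro a b
  rw [LinearMap.toMatrix_apply, PiLp.basisFun_repr]
  simp only [LinearMap.sum_apply, LinearMap.smul_apply, rankOne, LinearMap.smulRight_apply,
    ContinuousLinearMap.coe_coe, innerSL_apply_apply, PiLp.basisFun_apply]
  simp only [Finset.sum_apply, PiLp.smul_apply, smul_eq_mul, Matrix.of_apply]
  rw [show (PiLp.single 2 b (1:ℝ) : EuclideanSpace ℝ (Fin n)) = EuclideanSpace.single b 1 from rfl]
  simp only [EuclideanSpace.inner_single_right, conj_trivial, one_mul]
  show (∑ x : Fin k, w x • (u x b) • u x).ofLp a = _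
  rw [WithLp.ofLp_sum, Finset.sum_apply]
  exact Finset.sum_congr rfl fun i _ => by
    show w i * (u i b * u i a) = _; ring

end Aux

section CB
variable {n k : ℕ}

lemma det_expand (u : Fin k → EuclideanSpace ℝ (Fin n)) (w : Fin k → ℝ) :
    Matrix.det (Matrix.of fun a b : Fin n => ∑ i, w i * (u i a * u i b))
      = ∑ f : Fin n → Fin k,
          (∏ a, (w (f a) * u (f a) a)) * Matrix.det (Matrix.of fun a b => u (f a) b) := by
  have h : (Matrix.of fun a b : Fin n => ∑ i, w i * (u i a * u i b))
      = Matrix.of (fun a => ∑ i : Fin k, (w i * u i a) • (fun b : Fin n => u i b)) := by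
    apply Matrix.ext; intro a b
    simp [Finset.sum_apply, mul_assoc]
  rw [h]
  show (Matrix.detRowAlternating : (Fin n → ℝ) [⋀^Fin n]→ₗ[ℝ] ℝ).toMultilinearMap
      (fun a => ∑ i : Fin k, (w i * u i a) • (fun b : Fin n => u i b)) = _
  rw [MultilinearMap.map_sum]
  refine Finset.sum_congr rfl fun f _ => ?_
  rw [MultilinearMap.map_smul_univ]
  rfl

/-- Decomposition of injective tuples as strictly monotone tuple composed with a permutation. -/
noncomputable def injEquiv (n k : ℕ) :
    {f : Fin n → Fin k // Function.Injective f} ≃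
      {g : Fin n → Fin k // StrictMono g} × Equiv.Perm (Fin n) where
  toFun f := ⟨⟨f.1 ∘ Tuple.sort f.1,
      (Tuple.monotone_sort f.1).strictMono_of_injective
        (f.2.comp (Tuple.sort f.1).injective)⟩, (Tuple.sort f.1)⁻¹⟩
  invFun p := ⟨p.1.1 ∘ p.2, p.1.2.injective.comp p.2.injective⟩
  left_inv f := by
    ext a
    simp [Function.comp]
  right_inv p := by
    obtain ⟨⟨g, hg⟩, σ⟩ := p
    have hinj : Function.Injective (g ∘ σ) := hg.injective.comp σ.injective
    have hcard : (Finset.image g Finset.univ).card = n := by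
      rw [Finset.card_image_of_injective _ hg.injective, Finset.card_univ, Fintype.card_fin]
    have hsm : StrictMono ((g ∘ σ) ∘ Tuple.sort (g ∘ σ)) :=
      (Tuple.monotone_sort _).strictMono_of_injective (hinj.comp (Tuple.sort _).injective)
    have h1 : (g ∘ σ) ∘ Tuple.sort (g ∘ σ) = g :=
      (Finset.orderEmbOfFin_unique hcard (f := (g ∘ σ) ∘ Tuple.sort (g ∘ σ))
        (fun x => Finset.mem_image_of_mem g (Finset.mem_univ _)) hsm).trans
      (Finset.orderEmbOfFin_unique hcard (f := g)
        (fun x => Finset.mem_image_of_mem g (Finset.mem_univ _)) hg).symm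
    have h2 : Tuple.sort (g ∘ σ) = σ⁻¹ := by
      refine Equiv.ext fun a => ?_
      have key : σ (Tuple.sort (g ∘ σ) a) = a := by
        refine hg.injective ?_
        simpa [Function.comp] using congrFun h1 a
      apply σ.injective
      simp [key]
    refine Prod.ext ?_ ?_
    · exact Subtype.ext h1
    · simpa using congrArg Inv.inv h2

lemma cauchy_binet (u : Fin k → EuclideanSpace ℝ (Fin n)) (w : Fin k → ℝ) :
    Matrix.det (Matrix.of fun a b : Fin n => ∑ i, w i * (u i a * u i b))
      = ∑ g : {g : Fin n → Fin k // StrictMono g},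
          (∏ j, w (g.1 j)) * (Matrix.det (Matrix.of fun a b => u (g.1 a) b)) ^ 2 := by
  rw [det_expand]
  set T : (Fin n → Fin k) → ℝ := fun f =>
    (∏ a, (w (f a) * u (f a) a)) * Matrix.det (Matrix.of fun a b => u (f a) b) with hT
  rw [← Finset.sum_filter_add_sum_filter_not Finset.univ (fun f => Function.Injective f)]
  have hzero : ∑ f ∈ Finset.univ.filter (fun f => ¬ Function.Injective f), T f = 0 := by
    refine Finset.sum_eq_zero fun f hf => ?_
    rw [Finset.mem_filter] at hf
    obtain ⟨a, b, hab, hne⟩ := Function.not_injective_iff.1 hf.2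
    have hd : Matrix.det (Matrix.of fun a b => u (f a) b) = 0 :=
      Matrix.det_zero_of_row_eq hne (by funext j; simp [hab])
    simp [hT, hd]
  rw [hzero, add_zero]
  rw [Finset.sum_subtype (Finset.univ.filter (fun f => Function.Injective f))
    (p := fun f => Function.Injective f) (fun x => by simp) T]
  rw [← Equiv.sum_comp (injEquiv n k).symm (fun f => T f.1)]
  rw [Fintype.sum_prod_type]
  refine Finset.sum_congr rfl fun g _ => ?_
  have hsub : ∀ σ : Equiv.Perm (Fin n), T (g.1 ∘ σ)
      = ((∏ a, w (g.1 a)) * Matrix.det (Matrix.of fun a b => u (g.1 a) b))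
        * ((Equiv.Perm.sign σ : ℝ) * ∏ a, u (g.1 (σ a)) a) := by
    intro σ
    have hperm : Matrix.det (Matrix.of fun a b => u (g.1 (σ a)) b)
        = (Equiv.Perm.sign σ : ℝ) * Matrix.det (Matrix.of fun a b => u (g.1 a) b) := by
      rw [show (Matrix.of fun a b => u (g.1 (σ a)) b)
          = (Matrix.of fun a b => u (g.1 a) b).submatrix σ id from rfl]
      exact Matrix.det_permute σ _
    simp only [hT, Function.comp]
    rw [Finset.prod_mul_distrib, hperm, Equiv.prod_comp σ (fun a => w (g.1 a))]
    ring
  have hmain : ∑ σ : Equiv.Perm (Fin n), T (g.1 ∘ σ)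
      = ((∏ a, w (g.1 a)) * Matrix.det (Matrix.of fun a b => u (g.1 a) b))
        * ∑ σ : Equiv.Perm (Fin n), (Equiv.Perm.sign σ : ℝ) * ∏ a, u (g.1 (σ a)) a := by
    rw [Finset.mul_sum]
    exact Finset.sum_congr rfl fun σ _ => hsub σ
  have hdet : ∑ σ : Equiv.Perm (Fin n), (Equiv.Perm.sign σ : ℝ) * ∏ a, u (g.1 (σ a)) a
      = Matrix.det (Matrix.of fun a b => u (g.1 a) b) := by
    rw [Matrix.det_apply]
    exact Finset.sum_congr rfl fun σ _ => by simp [Units.smul_def]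
  have hfun : ∀ σ : Equiv.Perm (Fin n), ((injEquiv n k).symm (g, σ)).1 = g.1 ∘ σ := fun σ => rfl
  calc ∑ σ : Equiv.Perm (Fin n), T ((injEquiv n k).symm (g, σ)).1
      = ∑ σ : Equiv.Perm (Fin n), T (g.1 ∘ σ) := by simp only [hfun]
    _ = _ := by rw [hmain, hdet]; ring

lemma det_id_add_smul_rankOne (u0 : EuclideanSpace ℝ (Fin n)) (hu : ‖u0‖ = 1) (c0 : ℝ) :
    LinearMap.det (LinearMap.id + c0 • rankOne u0) = 1 + c0 := by
  rw [← LinearMap.det_toMatrix (PiLp.basisFun 2 ℝ (Fin n))]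
  have h1 : ∑ j, u0 j * u0 j = 1 := by
    have h : (inner ℝ u0 u0 : ℝ) = 1 := by
      rw [real_inner_self_eq_norm_mul_norm, hu]; norm_num
    rw [PiLp.inner_apply] at h
    simpa only [RCLike.inner_apply, conj_trivial] using h
  have hM : LinearMap.toMatrix (PiLp.basisFun 2 ℝ (Fin n)) (PiLp.basisFun 2 ℝ (Fin n))
      (LinearMap.id + c0 • rankOne u0)
      = 1 + Matrix.replicateCol Unit (fun a => u0 a) * Matrix.replicateRow Unit (fun j => c0 * u0 j) := by
    apply Matrix.ext; intro a j
    rw [LinearMap.toMatrix_apply, PiLp.basisFun_repr]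
    simp only [LinearMap.add_apply, LinearMap.id_apply, LinearMap.smul_apply, rankOne,
      LinearMap.smulRight_apply, ContinuousLinearMap.coe_coe, innerSL_apply_apply, PiLp.basisFun_apply,
      Matrix.add_apply, Matrix.mul_apply, Matrix.replicateCol_apply, Matrix.replicateRow_apply, Finset.sum_const,
      Finset.card_univ, Fintype.card_unit, one_smul]
    rw [show (PiLp.single 2 j (1:ℝ) : EuclideanSpace ℝ (Fin n)) = EuclideanSpace.single j 1
      from rfl]
    rw [EuclideanSpace.inner_single_right]
    have hadd : (EuclideanSpace.single j (1:ℝ) + c0 • ((1:ℝ) * (starRingEnd ℝ) (u0 j)) • u0) a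
        = EuclideanSpace.single j (1:ℝ) a + c0 * (u0 j * u0 a) := by
      show EuclideanSpace.single j (1:ℝ) a + c0 * ((1 * u0 j) * u0 a) = _
      ring_nf
    rw [hadd]
    simp [EuclideanSpace.single_apply, Matrix.one_apply, eq_comm]
    ring
  rw [hM, Matrix.det_one_add_replicateCol_mul_replicateRow]
  simp only [dotProduct]
  rw [show ∑ j, (c0 * u0 j) * u0 j = c0 * ∑ j, u0 j * u0 j from by
    rw [Finset.mul_sum]; exact Finset.sum_congr rfl fun j _ => by ring]
  rw [h1, mul_one]

end CB

theorem stmt7 {n k : ℕ} (u : Fin k → EuclideanSpace ℝ (Fin n)) (c : Fin k → ℝ)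
    (hu : ∀ i, ‖u i‖ = 1) (hc : ∀ i, 0 < c i)
    (hBL : ∑ i, c i • rankOne (u i) = LinearMap.id)
    (t : Fin k → ℝ) (ht : ∀ i, 0 < t i) :
    ∏ i, t i ^ c i ≤ LinearMap.det (∑ i, (c i * t i) • rankOne (u i)) := by
  classical
  set lam : {g : Fin n → Fin k // StrictMono g} → ℝ := fun g =>
    (∏ j, c (g.1 j)) * (Matrix.det (Matrix.of fun a b => u (g.1 a) b)) ^ 2 with hlam
  have hlam_nonneg : ∀ g, 0 ≤ lam g := fun g =>
    mul_nonneg (Finset.prod_nonneg fun j _ => (hc _).le) (sq_nonneg _)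
  have key : ∀ w : Fin k → ℝ, LinearMap.det (∑ i, w i • rankOne (u i))
      = ∑ g : {g : Fin n → Fin k // StrictMono g},
          (∏ j, w (g.1 j)) * (Matrix.det (Matrix.of fun a b => u (g.1 a) b)) ^ 2 :=
    fun w => (det_sum_rankOne u w).trans (cauchy_binet u w)
  have hsum1 : ∑ g : {g : Fin n → Fin k // StrictMono g}, lam g = 1 := by
    have h := key c
    rw [hBL, LinearMap.det_id] at h
    exact h.symm
  have hsum2 : ∀ i0 : Fin k,
      ∑ g : {g : Fin n → Fin k // StrictMono g},
        lam g * (if ∃ j, g.1 j = i0 then (1:ℝ) else 0) = c i0 := by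
    intro i0
    set w : Fin k → ℝ := fun i => c i * (if i = i0 then (2:ℝ) else 1) with hwdef
    have hw : ∑ i, w i • rankOne (u i) = LinearMap.id + c i0 • rankOne (u i0) := by
      have hsplit : ∀ i, w i • rankOne (u i)
          = c i • rankOne (u i) + (if i = i0 then c i0 • rankOne (u i0) else 0) := by
        intro i
        by_cases h : i = i0
        · subst h
          simp only [hwdef, if_true, eq_self_iff_true]
          rw [show (c i * 2 : ℝ) = c i + c i from by ring, add_smul]
        · simp [hwdef, h]
      rw [Finset.sum_congr rfl (fun i _ => hsplit i), Finset.sum_add_distrib, hBL,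
        Finset.sum_ite_eq' Finset.univ i0]
      simp
    have hdet2 := key w
    rw [hw, det_id_add_smul_rankOne (u i0) (hu i0) (c i0)] at hdet2
    have hprod : ∀ g : {g : Fin n → Fin k // StrictMono g},
        (∏ j, w (g.1 j)) * (Matrix.det (Matrix.of fun a b => u (g.1 a) b)) ^ 2
          = lam g + lam g * (if ∃ j, g.1 j = i0 then (1:ℝ) else 0) := by
      intro g
      have h2 : (∏ j, w (g.1 j))
          = (∏ j, c (g.1 j)) * ∏ j, (if g.1 j = i0 then (2:ℝ) else 1) := by
        rw [← Finset.prod_mul_distrib]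
      have h3 : (∏ j, (if g.1 j = i0 then (2:ℝ) else 1))
          = if ∃ j, g.1 j = i0 then (2:ℝ) else 1 := by
        by_cases h : ∃ j, g.1 j = i0
        · obtain ⟨j0, hj0⟩ := h
          have hiff : ∀ j, (g.1 j = i0) ↔ (j = j0) := fun j =>
            ⟨fun hj => g.2.injective (hj.trans hj0.symm), fun hj => hj ▸ hj0⟩
          rw [if_pos ⟨j0, hj0⟩]
          calc (∏ j, (if g.1 j = i0 then (2:ℝ) else 1))
              = ∏ j, (if j = j0 then (2:ℝ) else 1) :=
                Finset.prod_congr rfl fun j _ => by simp [hiff j]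
            _ = 2 := by simp
        · rw [if_neg h]
          push_neg at h
          exact Finset.prod_eq_one fun j _ => by simp [h j]
      rw [h2, h3, hlam]
      by_cases h : ∃ j, g.1 j = i0
      · simp only [h, if_true]; ring
      · simp only [h, if_false]; ring
    rw [Finset.sum_congr rfl (fun g _ => hprod g), Finset.sum_add_distrib, hsum1] at hdet2
    linarith
  -- the polynomial expression of the determinant
  rw [key (fun i => c i * t i)]
  have hPpos : ∀ g : {g : Fin n → Fin k // StrictMono g}, 0 < ∏ j, t (g.1 j) :=
    fun g => Finset.prod_pos fun j _ => ht _
  set x : {g : Fin n → Fin k // StrictMono g} → ℝ := fun g => Real.log (∏ j, t (g.1 j)) with hx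
  have hswap : ∑ g : {g : Fin n → Fin k // StrictMono g}, lam g * x g
      = ∑ i, c i * Real.log (t i) := by
    have hxg : ∀ g : {g : Fin n → Fin k // StrictMono g},
        x g = ∑ i, (if ∃ j, g.1 j = i then (1:ℝ) else 0) * Real.log (t i) := by
      intro g
      have h1 : x g = ∑ j, Real.log (t (g.1 j)) := by
        rw [hx]; exact Real.log_prod fun j _ => (ht _).ne'
      have h2 : ∑ i, (if ∃ j, g.1 j = i then (1:ℝ) else 0) * Real.log (t i)
          = ∑ i ∈ Finset.univ.filter (fun i => ∃ j, g.1 j = i), Real.log (t i) := by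
        rw [Finset.sum_filter]
        exact Finset.sum_congr rfl fun i _ => by by_cases h : ∃ j, g.1 j = i <;> simp [h]
      have h3 : Finset.univ.filter (fun i => ∃ j, g.1 j = i)
          = Finset.image g.1 Finset.univ := by
        ext i; simp [eq_comm, Finset.mem_image]
      rw [h1, h2, h3, Finset.sum_image (fun a _ b _ h => g.2.injective h)]
    rw [Finset.sum_congr rfl (fun g _ => by rw [hxg g, Finset.mul_sum])]
    rw [Finset.sum_comm]
    refine Finset.sum_congr rfl fun i _ => ?_
    rw [show ∑ g : {g : Fin n → Fin k // StrictMono g},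
        lam g * ((if ∃ j, g.1 j = i then (1:ℝ) else 0) * Real.log (t i))
        = (∑ g : {g : Fin n → Fin k // StrictMono g},
            lam g * (if ∃ j, g.1 j = i then (1:ℝ) else 0)) * Real.log (t i) from by
      rw [Finset.sum_mul]; exact Finset.sum_congr rfl fun g _ => by ring]
    rw [hsum2 i]
  have jensen : Real.exp (∑ g : {g : Fin n → Fin k // StrictMono g}, lam g * x g)
      ≤ ∑ g : {g : Fin n → Fin k // StrictMono g}, lam g * Real.exp (x g) := by
    have h := convexOn_exp.map_sum_le (t := Finset.univ) (w := lam) (p := x)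
      (fun g _ => hlam_nonneg g) hsum1 (fun g _ => Set.mem_univ _)
    simpa [smul_eq_mul] using h
  calc ∏ i, t i ^ c i
      = Real.exp (∑ i, c i * Real.log (t i)) := by
        rw [Real.exp_sum]
        exact Finset.prod_congr rfl fun i _ => by
          rw [Real.rpow_def_of_pos (ht i), mul_comm]
    _ = Real.exp (∑ g : {g : Fin n → Fin k // StrictMono g}, lam g * x g) := by rw [hswap]
    _ ≤ ∑ g : {g : Fin n → Fin k // StrictMono g}, lam g * Real.exp (x g) := jensen
    _ = ∑ g : {g : Fin n → Fin k // StrictMono g}, lam g * (∏ j, t (g.1 j)) := by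
        refine Finset.sum_congr rfl fun g _ => ?_
        rw [hx, Real.exp_log (hPpos g)]
    _ = ∑ g : {g : Fin n → Fin k // StrictMono g},
          (∏ j, (c (g.1 j) * t (g.1 j)))
            * (Matrix.det (Matrix.of fun a b => u (g.1 a) b)) ^ 2 := by
        refine Finset.sum_congr rfl fun g _ => ?_
        rw [Finset.prod_mul_distrib]
        simp only [hlam]
        ring
end

section
/- Let E_1,...,E_k be linear subspaces of R^n and c_1,...,c_k > 0 with ∑ c_i P_{E_i} = I_n. If V and W are proper critical subspaces, then V^⊥ and V + W are critical subspaces, and if moreover V ∩ W ≠ {0}, then V ∩ W is a critical subspace. -/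
open scoped BigOperators

open scoped RealInnerProductSpace
open Module LinearMap

noncomputable section Aux

variable {n : ℕ}

abbrev Euc (n : ℕ) := EuclideanSpace ℝ (Fin n)

noncomputable def pr (K : Submodule ℝ (Euc n)) : Euc n →ₗ[ℝ] Euc n :=
  K.subtype ∘ₗ (Submodule.orthogonalProjectionOnto K).toLinearMap

lemma pr_apply (K : Submodule ℝ (Euc n)) (x : Euc n) :
    pr K x = (Submodule.orthogonalProjectionOnto K x : Euc n) := rfl

lemma pr_mem (K : Submodule ℝ (Euc n)) (x : Euc n) : pr K x ∈ K := by
  simp [pr_apply]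

lemma pr_eq_self (K : Submodule ℝ (Euc n)) {x : Euc n} (hx : x ∈ K) : pr K x = x := by
  rw [pr_apply, Submodule.coe_orthogonalProjectionOnto_apply, Submodule.starProjection_eq_self_iff.mpr hx]

lemma pr_isProj (K : Submodule ℝ (Euc n)) : LinearMap.IsProj K (pr K) :=
  ⟨pr_mem K, fun x hx => pr_eq_self K hx⟩

lemma trace_pr (K : Submodule ℝ (Euc n)) :
    trace ℝ (Euc n) (pr K) = (finrank ℝ K : ℝ) := (pr_isProj K).trace

lemma inner_pr_right (K : Submodule ℝ (Euc n)) {x : Euc n} (hx : x ∈ K) (y : Euc n) :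
    ⟪x, pr K y⟫ = ⟪x, y⟫ := by
  have h := Submodule.starProjection_inner_eq_zero (K := K) y x hx
  rw [inner_sub_left, sub_eq_zero] at h
  rw [pr_apply, Submodule.coe_orthogonalProjectionOnto_apply, real_inner_comm, ← h, real_inner_comm]

lemma inner_pr_self (K : Submodule ℝ (Euc n)) (y : Euc n) :
    ⟪y, pr K y⟫ = ‖pr K y‖ ^ 2 := by
  rw [real_inner_comm, ← inner_pr_right K (pr_mem K y) y, real_inner_self_eq_norm_sq]

lemma pr_idem (K : Submodule ℝ (Euc n)) : pr K * pr K = pr K := by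
  apply LinearMap.ext; intro x
  rw [Module.End.mul_apply]; exact pr_eq_self K (pr_mem K x)

/-- Trace via an orthonormal basis. -/
lemma trace_eq_sum_inner {ι : Type*} [Fintype ι] [DecidableEq ι]
    (b : OrthonormalBasis ι ℝ (Euc n)) (f : Euc n →ₗ[ℝ] Euc n) :
    trace ℝ (Euc n) f = ∑ i, ⟪b i, f (b i)⟫ := by
  rw [trace_eq_matrix_trace ℝ b.toBasis, Matrix.trace]
  congr 1
  ext i
  rw [Matrix.diag_apply, LinearMap.toMatrix_apply, b.coe_toBasis, b.coe_toBasis_repr_apply,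
    b.repr_apply_apply]

end Aux

section Key
variable {n : ℕ}

lemma pr_symm (K : Submodule ℝ (Euc n)) (x y : Euc n) :
    ⟪pr K x, y⟫ = ⟪x, pr K y⟫ := by
  calc ⟪pr K x, y⟫ = ⟪pr K x, pr K y⟫ := (inner_pr_right K (pr_mem K x) y).symm
    _ = ⟪pr K y, pr K x⟫ := real_inner_comm _ _
    _ = ⟪pr K y, x⟫ := inner_pr_right K (pr_mem K y) x
    _ = ⟪x, pr K y⟫ := real_inner_comm _ _

lemma key (K U : Submodule ℝ (Euc n)) :
    (finrank ℝ ↥(K ⊓ U) : ℝ) ≤ trace ℝ (Euc n) (pr K * pr U) ∧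
      (trace ℝ (Euc n) (pr K * pr U) = (finrank ℝ ↥(K ⊓ U) : ℝ) →
        K = (K ⊓ U) ⊔ (K ⊓ Uᗮ)) := by
  classical
  set M := K ⊓ U with hMdef
  have hMK : M ≤ K := inf_le_left
  have hMU : M ≤ U := inf_le_right
  set m := finrank ℝ M with hm
  let o : OrthonormalBasis (Fin m) ℝ M := stdOrthonormalBasis ℝ M
  let f : Fin m → Euc n := fun j => (o j : Euc n)
  have hfM : ∀ j, f j ∈ M := fun j => (o j).2
  have hf_on : Orthonormal ℝ f := by
    constructor
    · intro j; exact o.orthonormal.1 j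
    · intro j l hjl
      have := o.orthonormal.2 hjl
      simpa [f, Submodule.coe_inner] using this
  have hf_inj : Function.Injective f := hf_on.linearIndependent.injective
  have hv_on : Orthonormal ℝ ((↑) : Set.range f → Euc n) :=
    (orthonormal_subtype_range hf_inj).mpr hf_on
  obtain ⟨u, b, hvu, hb⟩ := hv_on.exists_orthonormalBasis_extension
  have hbi : ∀ i : u, b i = (i : Euc n) := fun i => congrFun hb i
  have hspan : Submodule.span ℝ (Set.range f) = M := by
    have : Set.range f = M.subtype '' Set.range o := by
      rw [← Set.range_comp]; rfl
    rw [this, ← Submodule.map_span, ← o.coe_toBasis, Basis.span_eq, Submodule.map_top,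
      Submodule.range_subtype]
  have horth : ∀ i : u, (i : Euc n) ∉ Set.range f → (i : Euc n) ∈ Mᗮ := by
    intro i hi
    have hgen : ∀ j, ⟪f j, (i : Euc n)⟫ = 0 := by
      intro j
      have hj : f j ∈ (u : Set (Euc n)) := hvu ⟨j, rfl⟩
      have hne : (⟨f j, hj⟩ : u) ≠ i := by
        intro h
        exact hi ⟨j, by rw [← congrArg Subtype.val h]⟩
      have h2 : ⟪b ⟨f j, hj⟩, b i⟫ = 0 := b.orthonormal.2 hne
      rw [hbi, hbi] at h2
      exact h2
    have hsub : Set.range f ⊆ ((ℝ ∙ (i : Euc n))ᗮ : Set (Euc n)) := by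
      rintro _ ⟨j, rfl⟩
      rw [SetLike.mem_coe, Submodule.mem_orthogonal]
      intro y hy
      obtain ⟨r, rfl⟩ := Submodule.mem_span_singleton.mp hy
      rw [real_inner_smul_left, real_inner_comm, hgen j, mul_zero]
    have h1 : Submodule.span ℝ (Set.range f) ≤ (ℝ ∙ (i : Euc n))ᗮ :=
      Submodule.span_le.mpr hsub
    rw [← hspan]
    exact (Submodule.orthogonal_le h1)
      ((Submodule.le_orthogonal_orthogonal _) (Submodule.mem_span_singleton_self _))
  have hnorm1 : ∀ i : u, ‖(i : Euc n)‖ = 1 := by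
    intro i
    have := b.orthonormal.1 i
    rwa [hbi i] at this
  have hMrange : ∀ i : u, (i : Euc n) ∈ M → (i : Euc n) ∈ Set.range f := by
    intro i hiM
    by_contra hnot
    have h0 : (i : Euc n) = 0 := by
      have hmem : (i : Euc n) ∈ M ⊓ Mᗮ := ⟨hiM, horth i hnot⟩
      rwa [Submodule.inf_orthogonal_eq_bot, Submodule.mem_bot] at hmem
    have := hnorm1 i
    rw [h0] at this; simp at this
  -- the finset of basis indices lying in M
  have hcard : (Finset.univ.filter (fun i : u => (i : Euc n) ∈ M)).card = m := by
    have hbij : (Finset.univ : Finset (Fin m)).card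
        = (Finset.univ.filter (fun i : u => (i : Euc n) ∈ M)).card := by
      apply Finset.card_bij (fun j _ => (⟨f j, hvu ⟨j, rfl⟩⟩ : u))
      · intro j _
        simp only [Finset.mem_filter, Finset.mem_univ, true_and]
        exact hfM j
      · intro j1 _ j2 _ h
        have hf : f j1 = f j2 := by simpa using h
        have ho : o j1 = o j2 := Subtype.ext hf
        exact o.toBasis.injective (by rw [o.coe_toBasis]; exact ho)
      · intro i hi
        obtain ⟨j, hj⟩ := hMrange i (Finset.mem_filter.mp hi).2
        exact ⟨j, Finset.mem_univ j, Subtype.ext hj⟩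
    rw [← hbij, Finset.card_univ, Fintype.card_fin]
  set S : Euc n →ₗ[ℝ] Euc n := pr K * pr U * pr K with hS
  have htrS : trace ℝ (Euc n) S = trace ℝ (Euc n) (pr K * pr U) := by
    rw [hS, trace_mul_comm, ← mul_assoc, pr_idem]
  have hdiag : ∀ i : u, ⟪b i, S (b i)⟫ = ‖pr U (pr K (b i))‖ ^ 2 := by
    intro i
    have : S (b i) = pr K (pr U (pr K (b i))) := rfl
    rw [this, ← pr_symm, inner_pr_self]
  have hdiagM : ∀ i : u, (i : Euc n) ∈ M → ⟪b i, S (b i)⟫ = 1 := by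
    intro i hiM
    rw [hdiag i, hbi i, pr_eq_self K (hMK hiM), pr_eq_self U (hMU hiM), hnorm1 i, one_pow]
  have hdiag0 : ∀ i : u, 0 ≤ ⟪b i, S (b i)⟫ := by
    intro i; rw [hdiag i]; positivity
  have htr : trace ℝ (Euc n) (pr K * pr U) = ∑ i : u, ⟪b i, S (b i)⟫ := by
    rw [← htrS, trace_eq_sum_inner b]
  have hsplit : ∑ i : u, ⟪b i, S (b i)⟫
      = m + ∑ i ∈ Finset.univ.filter (fun i : u => ¬ (i : Euc n) ∈ M), ⟪b i, S (b i)⟫ := by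
    rw [← Finset.sum_filter_add_sum_filter_not Finset.univ (fun i : u => (i : Euc n) ∈ M)]
    congr 1
    rw [Finset.sum_congr rfl (fun i hi => hdiagM i (Finset.mem_filter.mp hi).2),
      Finset.sum_const, hcard, nsmul_eq_mul, mul_one]
  constructor
  · rw [htr, hsplit]
    have : 0 ≤ ∑ i ∈ Finset.univ.filter (fun i : u => ¬ (i : Euc n) ∈ M), ⟪b i, S (b i)⟫ :=
      Finset.sum_nonneg fun i _ => hdiag0 i
    linarith
  · intro heq
    rw [htr, hsplit] at heq
    have hz : ∀ i ∈ Finset.univ.filter (fun i : u => ¬ (i : Euc n) ∈ M), ⟪b i, S (b i)⟫ = 0 := by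
      rw [← Finset.sum_eq_zero_iff_of_nonneg (fun i _ => hdiag0 i)]
      linarith
    -- S agrees with pr M on the basis
    have hSM : S = pr M := by
      apply b.toBasis.ext
      intro i
      rw [b.coe_toBasis]
      by_cases hiM : (i : Euc n) ∈ M
      · have h1 : S (b i) = b i := by
          have : S (b i) = pr K (pr U (pr K (b i))) := rfl
          rw [this, hbi i, pr_eq_self K (hMK hiM), pr_eq_self U (hMU hiM),
            pr_eq_self K (hMK hiM)]
        rw [h1, hbi i, pr_eq_self M hiM]
      · have h2 : ⟪b i, S (b i)⟫ = 0 := hz i (by simp [hiM])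
        rw [hdiag i] at h2
        have h3 : pr U (pr K (b i)) = 0 := norm_eq_zero.mp (sq_eq_zero_iff.mp h2)
        have h4 : S (b i) = 0 := by
          have : S (b i) = pr K (pr U (pr K (b i))) := rfl
          rw [this, h3, map_zero]
        have h5 : pr M (b i) = 0 := by
          rw [hbi i, pr_apply,
            Submodule.orthogonalProjectionOnto_apply_of_mem_orthogonal (horth i ?_)]
          · simp
          · intro hir
            exact hiM (hspan ▸ Submodule.subset_span hir)
        rw [h4, h5]
    -- now prove the splitting
    apply le_antisymm
    · intro x hx
      have hSx : pr K (pr U x) = pr M x := by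
        have h1 : S x = pr K (pr U (pr K x)) := rfl
        have h2 : S x = pr M x := by rw [hSM]
        rw [h1, pr_eq_self K hx] at h2
        exact h2
      have hnU : ‖pr U x‖ ^ 2 = ‖pr M x‖ ^ 2 := by
        have e1 : ⟪x, pr U x⟫ = ‖pr U x‖ ^ 2 := inner_pr_self U x
        have e2 : ⟪x, pr K (pr U x)⟫ = ⟪x, pr U x⟫ := inner_pr_right K hx (pr U x)
        have e3 : ⟪x, pr M x⟫ = ‖pr M x‖ ^ 2 := inner_pr_self M x
        rw [hSx] at e2
        linarith
      have hcross : ⟪pr U x, pr M x⟫ = ‖pr M x‖ ^ 2 := by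
        have e1 : ⟪pr U x, pr M x⟫ = ⟪x, pr U (pr M x)⟫ := pr_symm U x (pr M x)
        rw [pr_eq_self U (hMU (pr_mem M x))] at e1
        rw [e1, inner_pr_self M x]
      have hzero : pr U x = pr M x := by
        have : ‖pr U x - pr M x‖ ^ 2 = 0 := by
          rw [norm_sub_sq_real]; linarith
        have := sq_eq_zero_iff.mp this
        rwa [norm_eq_zero, sub_eq_zero] at this
      have hxU : pr U x ∈ M := hzero ▸ pr_mem M x
      refine Submodule.mem_sup.mpr ⟨pr U x, ⟨hMK hxU, hMU hxU⟩, x - pr U x, ⟨?_, ?_⟩, by abel⟩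
      · exact Submodule.sub_mem K hx (hMK hxU)
      · exact Submodule.sub_starProjection_mem_orthogonal x
    · exact sup_le inf_le_left inf_le_left

end Key

section Main
variable {n k : ℕ}

lemma sum_pr_eq_id (E : Fin k → Submodule ℝ (Euc n)) (c : Fin k → ℝ)
    (hBL : ∀ x : Euc n, ∑ i, c i • ((Submodule.orthogonalProjectionOnto (E i) x : Euc n)) = x) :
    (∑ i, c i • pr (E i)) = LinearMap.id := by
  apply LinearMap.ext; intro x
  rw [LinearMap.sum_apply]
  simp only [LinearMap.smul_apply, LinearMap.id_apply]
  simpa only [pr_apply] using hBL x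

lemma sum_trace_eq (E : Fin k → Submodule ℝ (Euc n)) (c : Fin k → ℝ)
    (hBL : ∀ x : Euc n, ∑ i, c i • ((Submodule.orthogonalProjectionOnto (E i) x : Euc n)) = x)
    (U : Submodule ℝ (Euc n)) :
    ∑ i, c i * trace ℝ (Euc n) (pr (E i) * pr U) = (finrank ℝ U : ℝ) := by
  have h1 : (∑ i, c i • (pr (E i) * pr U)) = pr U := by
    have h2 : (∑ i, c i • (pr (E i) * pr U)) = (∑ i, c i • pr (E i)) * pr U := by
      rw [Finset.sum_mul]
      exact Finset.sum_congr rfl fun i _ => (smul_mul_assoc _ _ _).symm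
    rw [h2, sum_pr_eq_id E c hBL, ← Module.End.one_eq_id, one_mul]
  calc ∑ i, c i * trace ℝ (Euc n) (pr (E i) * pr U)
      = trace ℝ (Euc n) (∑ i, c i • (pr (E i) * pr U)) := by
        rw [map_sum]
        exact Finset.sum_congr rfl fun i _ => by rw [map_smul, smul_eq_mul]
    _ = trace ℝ (Euc n) (pr U) := by rw [h1]
    _ = (finrank ℝ U : ℝ) := trace_pr U

lemma sum_dim_le (E : Fin k → Submodule ℝ (Euc n)) (c : Fin k → ℝ) (hc : ∀ i, 0 < c i)
    (hBL : ∀ x : Euc n, ∑ i, c i • ((Submodule.orthogonalProjectionOnto (E i) x : Euc n)) = x)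
    (U : Submodule ℝ (Euc n)) :
    ∑ i, c i * (finrank ℝ ↥(E i ⊓ U) : ℝ) ≤ (finrank ℝ U : ℝ) := by
  rw [← sum_trace_eq E c hBL U]
  exact Finset.sum_le_sum fun i _ =>
    mul_le_mul_of_nonneg_left (key (E i) U).1 (hc i).le

lemma crit_split (E : Fin k → Submodule ℝ (Euc n)) (c : Fin k → ℝ) (hc : ∀ i, 0 < c i)
    (hBL : ∀ x : Euc n, ∑ i, c i • ((Submodule.orthogonalProjectionOnto (E i) x : Euc n)) = x)
    (V : Submodule ℝ (Euc n))
    (hVcrit : (∑ i, c i * (finrank ℝ ↥(E i ⊓ V) : ℝ)) = (finrank ℝ V : ℝ)) :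
    ∀ i, finrank ℝ (E i) = finrank ℝ ↥(E i ⊓ V) + finrank ℝ ↥(E i ⊓ Vᗮ) := by
  have hts := sum_trace_eq E c hBL V
  have hle : ∀ i ∈ Finset.univ, c i * (finrank ℝ ↥(E i ⊓ V) : ℝ)
      ≤ c i * trace ℝ (Euc n) (pr (E i) * pr V) := fun i _ =>
    mul_le_mul_of_nonneg_left (key (E i) V).1 (hc i).le
  have heach : ∀ i, trace ℝ (Euc n) (pr (E i) * pr V) = (finrank ℝ ↥(E i ⊓ V) : ℝ) := by
    intro i
    by_contra hne
    have hlt : c i * (finrank ℝ ↥(E i ⊓ V) : ℝ) < c i * trace ℝ (Euc n) (pr (E i) * pr V) :=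
      (mul_lt_mul_iff_right₀ (hc i)).mpr (lt_of_le_of_ne (key (E i) V).1 (Ne.symm hne))
    have := Finset.sum_lt_sum hle ⟨i, Finset.mem_univ i, hlt⟩
    rw [hVcrit, hts] at this
    exact lt_irrefl _ this
  intro i
  have hsplit := (key (E i) V).2 (heach i)
  have hd := Submodule.finrank_sup_add_finrank_inf_eq (E i ⊓ V) (E i ⊓ Vᗮ)
  have hbot : (E i ⊓ V) ⊓ (E i ⊓ Vᗮ) = ⊥ := by
    rw [eq_bot_iff]
    exact ((inf_le_inf inf_le_right inf_le_right).trans_eq V.inf_orthogonal_eq_bot)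
  rw [hbot, finrank_bot, add_zero, ← hsplit] at hd
  omega

lemma sum_dims (E : Fin k → Submodule ℝ (Euc n)) (c : Fin k → ℝ)
    (hBL : ∀ x : Euc n, ∑ i, c i • ((Submodule.orthogonalProjectionOnto (E i) x : Euc n)) = x) :
    ∑ i, c i * (finrank ℝ (E i) : ℝ) = (n : ℝ) := by
  have h := sum_trace_eq E c hBL ⊤
  have htop : pr (⊤ : Submodule ℝ (Euc n)) = LinearMap.id :=
    LinearMap.ext fun x => pr_eq_self ⊤ Submodule.mem_top
  have h2 : ∀ i, pr (E i) * pr (⊤ : Submodule ℝ (Euc n)) = pr (E i) := by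
    intro i; rw [htop, ← Module.End.one_eq_id, mul_one]
  simp only [h2, trace_pr] at h
  rw [h, finrank_top, finrank_euclideanSpace_fin]

end Main

/-- A nonzero subspace `V` is critical for the data `(E, c)` if
`∑ i, c i · dim (E i ⊓ V) = dim V`. -/
def IsCritical {n k : ℕ} (E : Fin k → Submodule ℝ (EuclideanSpace ℝ (Fin n)))
    (c : Fin k → ℝ) (V : Submodule ℝ (EuclideanSpace ℝ (Fin n))) : Prop :=
  V ≠ ⊥ ∧ (∑ i, c i * (Module.finrank ℝ ↥(E i ⊓ V) : ℝ)) = (Module.finrank ℝ V : ℝ)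

theorem stmt11 {n k : ℕ} (E : Fin k → Submodule ℝ (EuclideanSpace ℝ (Fin n)))
    (c : Fin k → ℝ) (hc : ∀ i, 0 < c i)
    (hBL : ∀ x : EuclideanSpace ℝ (Fin n),
      ∑ i, c i • ((Submodule.orthogonalProjectionOnto (E i) x : EuclideanSpace ℝ (Fin n))) = x)
    (V W : Submodule ℝ (EuclideanSpace ℝ (Fin n))) (hV : V ≠ ⊤) (hW : W ≠ ⊤)
    (hVc : IsCritical E c V) (hWc : IsCritical E c W) :
    IsCritical E c Vᗮ ∧ IsCritical E c (V ⊔ W) ∧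
      (V ⊓ W ≠ ⊥ → IsCritical E c (V ⊓ W)) := by
  obtain ⟨hVne, hVsum⟩ := hVc
  obtain ⟨hWne, hWsum⟩ := hWc
  have hsplitV := crit_split E c hc hBL V hVsum
  have hn := sum_dims E c hBL
  have hVp : IsCritical E c Vᗮ := by
    refine ⟨fun h => hV (Submodule.orthogonal_eq_bot_iff.mp h), ?_⟩
    have hVorth : (finrank ℝ V : ℝ) + (finrank ℝ Vᗮ : ℝ) = (n : ℝ) := by
      have h1 := Submodule.finrank_add_finrank_orthogonal V
      rw [finrank_euclideanSpace_fin] at h1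
      exact_mod_cast congrArg (Nat.cast : ℕ → ℝ) h1
    have hsum2 : ∑ i, c i * (finrank ℝ ↥(E i ⊓ Vᗮ) : ℝ)
        = ∑ i, (c i * (finrank ℝ (E i) : ℝ) - c i * (finrank ℝ ↥(E i ⊓ V) : ℝ)) := by
      apply Finset.sum_congr rfl
      intro i _
      have hcast : (finrank ℝ (E i) : ℝ)
          = (finrank ℝ ↥(E i ⊓ V) : ℝ) + (finrank ℝ ↥(E i ⊓ Vᗮ) : ℝ) := by
        exact_mod_cast congrArg (Nat.cast : ℕ → ℝ) (hsplitV i)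
      rw [hcast]; ring
    rw [hsum2, Finset.sum_sub_distrib, hn, hVsum]
    linarith
  have hA := sum_dim_le E c hc hBL (V ⊔ W)
  have hB := sum_dim_le E c hc hBL (V ⊓ W)
  have hterm : ∀ i ∈ Finset.univ,
      c i * (finrank ℝ ↥(E i ⊓ V) : ℝ) + c i * (finrank ℝ ↥(E i ⊓ W) : ℝ)
      ≤ c i * (finrank ℝ ↥(E i ⊓ (V ⊔ W)) : ℝ) + c i * (finrank ℝ ↥(E i ⊓ (V ⊓ W)) : ℝ) := by
    intro i _
    have h1 := Submodule.finrank_sup_add_finrank_inf_eq (E i ⊓ V) (E i ⊓ W)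
    have h2 : (E i ⊓ V) ⊔ (E i ⊓ W) ≤ E i ⊓ (V ⊔ W) :=
      sup_le (inf_le_inf_left _ le_sup_left) (inf_le_inf_left _ le_sup_right)
    have h3 : (E i ⊓ V) ⊓ (E i ⊓ W) = E i ⊓ (V ⊓ W) := (inf_inf_distrib_left _ _ _).symm
    have h4 := Submodule.finrank_mono h2
    have h5 : finrank ℝ ↥(E i ⊓ V) + finrank ℝ ↥(E i ⊓ W)
        ≤ finrank ℝ ↥(E i ⊓ (V ⊔ W)) + finrank ℝ ↥(E i ⊓ (V ⊓ W)) := by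
      rw [h3] at h1; omega
    have h6 : (finrank ℝ ↥(E i ⊓ V) : ℝ) + (finrank ℝ ↥(E i ⊓ W) : ℝ)
        ≤ (finrank ℝ ↥(E i ⊓ (V ⊔ W)) : ℝ) + (finrank ℝ ↥(E i ⊓ (V ⊓ W)) : ℝ) := by
      exact_mod_cast h5
    have h7 := mul_le_mul_of_nonneg_left h6 (hc i).le
    linarith
  have hsum3 : (finrank ℝ V : ℝ) + (finrank ℝ W : ℝ)
      ≤ (∑ i, c i * (finrank ℝ ↥(E i ⊓ (V ⊔ W)) : ℝ))
        + ∑ i, c i * (finrank ℝ ↥(E i ⊓ (V ⊓ W)) : ℝ) := by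
    have h8 := Finset.sum_le_sum hterm
    rw [Finset.sum_add_distrib, Finset.sum_add_distrib, hVsum, hWsum] at h8
    exact h8
  have hdim : (finrank ℝ ↥(V ⊔ W) : ℝ) + (finrank ℝ ↥(V ⊓ W) : ℝ)
      = (finrank ℝ V : ℝ) + (finrank ℝ W : ℝ) := by
    exact_mod_cast congrArg (Nat.cast : ℕ → ℝ) (Submodule.finrank_sup_add_finrank_inf_eq V W)
  have hAeq : (∑ i, c i * (finrank ℝ ↥(E i ⊓ (V ⊔ W)) : ℝ)) = (finrank ℝ ↥(V ⊔ W) : ℝ) := by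
    linarith
  have hBeq : (∑ i, c i * (finrank ℝ ↥(E i ⊓ (V ⊓ W)) : ℝ)) = (finrank ℝ ↥(V ⊓ W) : ℝ) := by
    linarith
  refine ⟨hVp, ⟨?_, hAeq⟩, fun hne => ⟨hne, hBeq⟩⟩
  intro h
  exact hVne (le_bot_iff.mp (h ▸ (le_sup_left : V ≤ V ⊔ W)))
end

section
/- (Barthe's determinantal inequality) Let E_1,...,E_k be linear subspaces of R^n and c_1,...,c_k > 0 with ∑_{i=1}^k c_i P_{E_i} = I_n. If A_i : E_i → E_i is a positive definite symmetric linear transformation for each i, then det(∑_{i=1}^k c_i A_i P_{E_i}) ≥ ∏_{i=1}^k (det A_i)^{c_i}. -/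
section BartheAux
open Finset Matrix Equiv BigOperators Function

variable {J : Type*} [Fintype J] [DecidableEq J]

theorem det_mul_aux' {n : ℕ} {M : Matrix (Fin n) J ℝ} {N : Matrix J (Fin n) ℝ} {p : Fin n → J}
    (H : ¬Function.Injective p) :
    (∑ σ : Equiv.Perm (Fin n), (Equiv.Perm.sign σ : ℝ) * ∏ x, M (σ x) (p x) * N (p x) x) = 0 := by
  obtain ⟨i, j, hpij, hij⟩ : ∃ i j, p i = p j ∧ i ≠ j := by
    rw [Function.Injective] at H
    push_neg at H
    obtain ⟨i, j, h1, h2⟩ := H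
    exact ⟨i, j, h1, h2⟩
  exact Finset.sum_involution (fun σ _ => σ * Equiv.swap i j)
      (fun σ _ => by
        have : (∏ x, M (σ x) (p x)) = ∏ x, M ((σ * Equiv.swap i j) x) (p x) :=
          Fintype.prod_equiv (Equiv.swap i j) _ _ (by simp [Equiv.apply_swap_eq_self hpij])
        simp [this, Equiv.Perm.sign_swap hij, -Equiv.Perm.sign_swap',
          Finset.prod_mul_distrib])
      (fun σ _ _ => (not_congr Equiv.mul_swap_eq_iff).mpr hij)
      (fun _ _ => Finset.mem_univ _)
      (fun σ _ => Equiv.mul_swap_involutive i j σ)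

theorem det_mul_expansion {n : ℕ} (M : Matrix (Fin n) J ℝ) (N : Matrix J (Fin n) ℝ) :
    (M * N).det = ∑ p ∈ Finset.univ.filter (fun p : Fin n → J => Function.Injective p),
      ∑ σ : Equiv.Perm (Fin n), (Equiv.Perm.sign σ : ℝ) * ∏ i, M (σ i) (p i) * N (p i) i := by
  have h1 : (M * N).det
      = ∑ p : Fin n → J, ∑ σ : Equiv.Perm (Fin n),
        (Equiv.Perm.sign σ : ℝ) * ∏ i, M (σ i) (p i) * N (p i) i := by
    simp only [det_apply', mul_apply, Finset.prod_univ_sum, Finset.mul_sum,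
      Fintype.piFinset_univ]
    rw [Finset.sum_comm]
  rw [h1]
  refine (Finset.sum_subset (Finset.filter_subset _ _) fun p _ hp => det_mul_aux' ?_).symm
  simpa using hp

theorem sum_perm_sq {n : ℕ} (C : Matrix (Fin n) (Fin n) ℝ) :
    ∑ τ : Equiv.Perm (Fin n), ∑ σ : Equiv.Perm (Fin n),
      (Equiv.Perm.sign σ : ℝ) * ∏ i, C (σ i) (τ i) * C i (τ i) = C.det ^ 2 := by
  have h1 : ∀ τ : Equiv.Perm (Fin n),
      ∑ σ : Equiv.Perm (Fin n), (Equiv.Perm.sign σ : ℝ) * ∏ i, C (σ i) (τ i) * C i (τ i)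
        = ((Equiv.Perm.sign τ : ℝ) * C.det) * ∏ i, C i (τ i) := by
    intro τ
    have h2 : ∀ σ : Equiv.Perm (Fin n),
        (Equiv.Perm.sign σ : ℝ) * ∏ i, C (σ i) (τ i) * C i (τ i)
          = ((Equiv.Perm.sign σ : ℝ) * ∏ i, C (σ i) (τ i)) * ∏ i, C i (τ i) := by
      intro σ; rw [Finset.prod_mul_distrib, mul_assoc]
    rw [Finset.sum_congr rfl fun σ _ => h2 σ, ← Finset.sum_mul]
    congr 1
    have : ∑ σ : Equiv.Perm (Fin n), (Equiv.Perm.sign σ : ℝ) * ∏ i, C (σ i) (τ i)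
        = (C.submatrix id τ).det := by
      rw [det_apply']; rfl
    rw [this, det_permute']
  rw [Finset.sum_congr rfl fun τ _ => h1 τ]
  have h3 : ∑ τ : Equiv.Perm (Fin n), ((Equiv.Perm.sign τ : ℝ) * C.det) * ∏ i, C i (τ i)
      = C.det * ∑ τ : Equiv.Perm (Fin n), (Equiv.Perm.sign τ : ℝ) * ∏ i, Cᵀ (τ i) i := by
    rw [Finset.mul_sum]
    refine Finset.sum_congr rfl fun τ _ => ?_
    simp only [transpose_apply]
    ring
  rw [h3, ← det_apply', det_transpose, sq]

theorem det_diag_expansion {n : ℕ} (M : Matrix (Fin n) J ℝ) (l : J → ℝ) :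
    (M * (Matrix.diagonal l * Mᵀ)).det
      = ∑ p ∈ Finset.univ.filter (fun p : Fin n → J => Function.Injective p),
        ((n.factorial : ℝ))⁻¹ * ((M.submatrix id p).det ^ 2 * ∏ i, l (p i)) := by
  classical
  set t : (Fin n → J) → ℝ :=
    fun p => ∑ σ : Equiv.Perm (Fin n), (Equiv.Perm.sign σ : ℝ) * ∏ i, M (σ i) (p i) * M i (p i)
    with ht
  set s : Finset (Fin n → J) := Finset.univ.filter (fun p : Fin n → J => Function.Injective p)
    with hs
  have hstep : (M * (Matrix.diagonal l * Mᵀ)).det = ∑ p ∈ s, (∏ i, l (p i)) * t p := by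
    rw [det_mul_expansion]
    refine Finset.sum_congr rfl fun p _ => ?_
    rw [ht, Finset.mul_sum]
    refine Finset.sum_congr rfl fun σ _ => ?_
    have h0 : ∀ i, M (σ i) (p i) * (Matrix.diagonal l * Mᵀ) (p i) i
        = l (p i) * (M (σ i) (p i) * M i (p i)) := by
      intro i
      rw [Matrix.diagonal_mul, Matrix.transpose_apply]
      ring
    rw [Finset.prod_congr rfl fun i _ => h0 i, Finset.prod_mul_distrib]
    ring
  have hinv : ∀ τ : Equiv.Perm (Fin n),
      (∑ p ∈ s, (∏ i, l (p i)) * t p) = ∑ p ∈ s, (∏ i, l (p i)) * t (p ∘ τ) := by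
    intro τ
    have hF : ∀ p : Fin n → J,
        (if Function.Injective (p ∘ τ) then (∏ i, l ((p ∘ τ) i)) * t (p ∘ τ) else 0)
          = (if Function.Injective p then (∏ i, l (p i)) * t (p ∘ τ) else 0) := by
      intro p
      have hiff : Function.Injective (p ∘ τ) ↔ Function.Injective p := by
        constructor
        · intro h
          have := h.comp τ.symm.injective
          simpa [Function.comp_def] using this
        · intro h; exact h.comp τ.injective
      have hprod : (∏ i, l ((p ∘ τ) i)) = ∏ i, l (p i) := Equiv.prod_comp τ fun i => l (p i)
      rw [hprod]
      by_cases h : Function.Injective p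
      · rw [if_pos (hiff.mpr h), if_pos h]
      · rw [if_neg (fun hh => h (hiff.mp hh)), if_neg h]
    calc (∑ p ∈ s, (∏ i, l (p i)) * t p)
        = ∑ p : Fin n → J, if Function.Injective p then (∏ i, l (p i)) * t p else 0 := by
          rw [hs, Finset.sum_filter]
      _ = ∑ p : Fin n → J,
            if Function.Injective (p ∘ τ) then (∏ i, l ((p ∘ τ) i)) * t (p ∘ τ) else 0 := by
          refine (Fintype.sum_equiv (Equiv.arrowCongr τ.symm (Equiv.refl J)) _ _ ?_).symm
          intro p
          have : (Equiv.arrowCongr τ.symm (Equiv.refl J)) p = p ∘ τ := by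
            funext i; simp [Equiv.arrowCongr]
          rw [this]
      _ = ∑ p : Fin n → J, if Function.Injective p then (∏ i, l (p i)) * t (p ∘ τ) else 0 := by
          exact Finset.sum_congr rfl fun p _ => hF p
      _ = ∑ p ∈ s, (∏ i, l (p i)) * t (p ∘ τ) := by rw [hs, Finset.sum_filter]
  have hsq : ∀ p : Fin n → J,
      (∑ τ : Equiv.Perm (Fin n), t (p ∘ τ)) = (M.submatrix id p).det ^ 2 := by
    intro p
    rw [← sum_perm_sq (M.submatrix id p)]
    rfl
  have hfac : ((n.factorial : ℝ)) ≠ 0 := by exact_mod_cast n.factorial_ne_zero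
  have hmain : (n.factorial : ℝ) * (∑ p ∈ s, (∏ i, l (p i)) * t p)
      = ∑ p ∈ s, (∏ i, l (p i)) * (M.submatrix id p).det ^ 2 := by
    have hcard : ((Finset.univ : Finset (Equiv.Perm (Fin n))).card : ℝ) = (n.factorial : ℝ) := by
      rw [Finset.card_univ, Fintype.card_perm, Fintype.card_fin]
    calc (n.factorial : ℝ) * (∑ p ∈ s, (∏ i, l (p i)) * t p)
        = ∑ _τ : Equiv.Perm (Fin n), (∑ p ∈ s, (∏ i, l (p i)) * t p) := by
          rw [Finset.sum_const, nsmul_eq_mul, Finset.card_univ, Fintype.card_perm,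
            Fintype.card_fin]
      _ = ∑ τ : Equiv.Perm (Fin n), ∑ p ∈ s, (∏ i, l (p i)) * t (p ∘ τ) :=
          Finset.sum_congr rfl fun τ _ => hinv τ
      _ = ∑ p ∈ s, ∑ τ : Equiv.Perm (Fin n), (∏ i, l (p i)) * t (p ∘ τ) := Finset.sum_comm
      _ = ∑ p ∈ s, (∏ i, l (p i)) * (M.submatrix id p).det ^ 2 := by
          refine Finset.sum_congr rfl fun p _ => ?_
          rw [← Finset.mul_sum, hsq p]
  rw [hstep]
  have := congrArg (fun x => ((n.factorial : ℝ))⁻¹ * x) hmain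
  rw [inv_mul_cancel_left₀ hfac] at this
  rw [this, Finset.mul_sum]
  exact Finset.sum_congr rfl fun p _ => by ring

theorem barthe_matrix {n : ℕ} (M : Matrix (Fin n) J ℝ) (hMM : M * Mᵀ = 1)
    (l : J → ℝ) (hl : ∀ j, 0 < l j) :
    ∏ j, l j ^ (∑ x, M x j ^ 2) ≤ (M * (Matrix.diagonal l * Mᵀ)).det := by
  classical
  set s : Finset (Fin n → J) := Finset.univ.filter (fun p : Fin n → J => Function.Injective p)
    with hs
  set w : (Fin n → J) → ℝ := fun p => ((n.factorial : ℝ))⁻¹ * (M.submatrix id p).det ^ 2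
    with hw
  have hwnn : ∀ p, 0 ≤ w p := fun p =>
    mul_nonneg (inv_nonneg.mpr (Nat.cast_nonneg _)) (sq_nonneg _)
  have hexp : ∀ g : J → ℝ, (M * (Matrix.diagonal g * Mᵀ)).det
      = ∑ p ∈ s, w p * ∏ i, g (p i) := by
    intro g
    rw [det_diag_expansion]
    exact Finset.sum_congr rfl fun p _ => by rw [hw]; ring
  have hw1 : ∑ p ∈ s, w p = 1 := by
    have h := hexp (fun _ => 1)
    simp only [Finset.prod_const_one, mul_one] at h
    rw [← h, Matrix.diagonal_one, Matrix.one_mul, hMM, Matrix.det_one]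
  have hmarg : ∀ j0 : J, ∑ p ∈ s, (if j0 ∈ Finset.image p Finset.univ then w p else 0)
      = ∑ x, M x j0 ^ 2 := by
    intro j0
    set l0 : J → ℝ := fun j => if j = j0 then 0 else 1 with hl0
    have hprod : ∀ p : Fin n → J, (∏ i, l0 (p i))
        = if j0 ∈ Finset.image p Finset.univ then 0 else 1 := by
      intro p
      by_cases h : j0 ∈ Finset.image p Finset.univ
      · obtain ⟨i, _, hi⟩ := Finset.mem_image.mp h
        rw [if_pos h]
        exact Finset.prod_eq_zero (Finset.mem_univ i) (by simp [hl0, hi])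
      · rw [if_neg h]
        refine Finset.prod_eq_one fun i _ => ?_
        have hne : p i ≠ j0 := fun hh => h (Finset.mem_image.mpr ⟨i, Finset.mem_univ i, hh⟩)
        simp [hl0, hne]
    have hdet : (M * (Matrix.diagonal l0 * Mᵀ)).det = 1 - ∑ x, M x j0 ^ 2 := by
      have hM' : M * (Matrix.diagonal l0 * Mᵀ)
          = 1 + Matrix.replicateCol Unit (-(fun x => M x j0)) * Matrix.replicateRow Unit (fun x => M x j0) := by
        ext x y
        have h1 : (M * (Matrix.diagonal l0 * Mᵀ)) x y
            = (∑ j, M x j * M y j) - M x j0 * M y j0 := by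
          rw [Matrix.mul_apply]
          have h2 : ∀ j : J, M x j * (Matrix.diagonal l0 * Mᵀ) j y
              = M x j * M y j - (if j = j0 then M x j * M y j else 0) := by
            intro j
            rw [Matrix.diagonal_mul, Matrix.transpose_apply, hl0]
            by_cases hj : j = j0 <;> simp [hj]
          rw [Finset.sum_congr rfl fun j _ => h2 j, Finset.sum_sub_distrib,
            Finset.sum_ite_eq' Finset.univ j0 (fun j => M x j * M y j), if_pos (Finset.mem_univ _)]
        rw [h1, Matrix.add_apply, Matrix.mul_apply]
        have h4 : (1 : Matrix (Fin n) (Fin n) ℝ) x y = ∑ j, M x j * M y j := by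
          rw [← hMM, Matrix.mul_apply]
          simp [Matrix.transpose_apply]
        rw [h4]
        simp [Matrix.replicateCol_apply, Matrix.replicateRow_apply]
        ring
      rw [hM', Matrix.det_one_add_replicateCol_mul_replicateRow]
      have h5 : (fun x => M x j0) ⬝ᵥ (-(fun x => M x j0)) = -∑ x, M x j0 ^ 2 := by
        simp only [dotProduct, Pi.neg_apply, mul_neg, ← Finset.sum_neg_distrib]
        refine Finset.sum_congr rfl fun x _ => ?_
        ring
      rw [h5]
      ring
    have hsum : ∑ p ∈ s, w p * ∏ i, l0 (p i)
        = ∑ p ∈ s, (w p - if j0 ∈ Finset.image p Finset.univ then w p else 0) := by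
      refine Finset.sum_congr rfl fun p _ => ?_
      rw [hprod p]
      by_cases h : j0 ∈ Finset.image p Finset.univ <;> simp [h]
    have := hexp l0
    rw [hsum, Finset.sum_sub_distrib, hw1, hdet] at this
    linarith
  -- AM-GM
  have hamgm := Real.geom_mean_le_arith_mean_weighted s w (fun p => ∏ i, l (p i))
    (fun p _ => hwnn p) hw1 (fun p _ => Finset.prod_nonneg fun i _ => (hl (p i)).le)
  rw [hexp l]
  refine le_trans (le_of_eq ?_) hamgm
  -- rearrange the geometric mean
  have key : ∀ p ∈ s, (∏ i, l (p i)) ^ w p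
      = ∏ j, l j ^ (if j ∈ Finset.image p Finset.univ then w p else 0) := by
    intro p hp
    have hinj : Function.Injective p := by
      rw [hs] at hp; exact (Finset.mem_filter.mp hp).2
    rw [← Real.finset_prod_rpow Finset.univ (fun i => l (p i))
      (fun i _ => (hl (p i)).le) (w p)]
    have himg : (∏ i, l (p i) ^ w p) = ∏ j ∈ Finset.image p Finset.univ, l j ^ w p :=
      (Finset.prod_image (f := fun j => l j ^ w p) fun a _ b _ h => hinj h).symm
    rw [himg]
    have : ∀ j : J, l j ^ (if j ∈ Finset.image p Finset.univ then w p else 0)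
        = if j ∈ Finset.image p Finset.univ then l j ^ w p else 1 := by
      intro j
      by_cases h : j ∈ Finset.image p Finset.univ <;> simp [h, Real.rpow_zero]
    rw [Finset.prod_congr rfl fun j _ => this j, ← Finset.prod_filter,
      Finset.filter_mem_eq_inter, Finset.univ_inter]
  rw [Finset.prod_congr rfl key, Finset.prod_comm]
  refine Finset.prod_congr rfl fun j _ => ?_
  rw [← Real.rpow_sum_of_pos (hl j), hmarg j]

end BartheAux

open Matrix
open scoped BigOperators RealInnerProductSpace

set_option maxHeartbeats 1000000 in
theorem stmt12 {n k : ℕ} (E : Fin k → Submodule ℝ (EuclideanSpace ℝ (Fin n)))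
    (c : Fin k → ℝ) (hc : ∀ i, 0 < c i)
    (hBL : ∀ x : EuclideanSpace ℝ (Fin n),
      ∑ i, c i • ((Submodule.orthogonalProjectionOnto (E i) x : EuclideanSpace ℝ (Fin n))) = x)
    (A : ∀ i, (E i) →ₗ[ℝ] (E i))
    (hsym : ∀ i, ∀ x y : E i, (inner ℝ (A i x) y : ℝ) = inner ℝ x (A i y))
    (hpos : ∀ i, ∀ x : E i, x ≠ 0 → 0 < (inner ℝ (A i x) x : ℝ)) :
    ∏ i, LinearMap.det (A i) ^ c i ≤
      LinearMap.det (∑ i, c i •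
        ((E i).subtype ∘ₗ (A i) ∘ₗ (Submodule.orthogonalProjectionOnto (E i)).toLinearMap)) := by
  classical
  set T : EuclideanSpace ℝ (Fin n) →ₗ[ℝ] EuclideanSpace ℝ (Fin n) :=
    ∑ i, c i • ((E i).subtype ∘ₗ (A i) ∘ₗ (Submodule.orthogonalProjectionOnto (E i)).toLinearMap) with hT
  have hsymm : ∀ i, (A i).IsSymmetric := hsym
  set d : Fin k → ℕ := fun i => Module.finrank ℝ (E i) with hd
  set v : ∀ i, OrthonormalBasis (Fin (d i)) ℝ (E i) :=
    fun i => (hsymm i).eigenvectorBasis rfl with hv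
  set μ : ∀ i, Fin (d i) → ℝ := fun i => (hsymm i).eigenvalues rfl with hμ
  have happly : ∀ i a, A i (v i a) = μ i a • v i a := by
    intro i a
    have := (hsymm i).apply_eigenvectorBasis rfl a
    simpa [hv, hμ] using this
  have hvnorm : ∀ i a, ‖v i a‖ = 1 := fun i a => (v i).orthonormal.1 a
  have hvne : ∀ i a, v i a ≠ 0 := by
    intro i a h
    have := hvnorm i a
    rw [h, norm_zero] at this
    norm_num at this
  have hμpos : ∀ i a, 0 < μ i a := by
    intro i a
    have h1 := hpos i (v i a) (hvne i a)
    have h2 : ⟪μ i a • v i a, v i a⟫ = μ i a * ‖v i a‖ ^ 2 := by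
      rw [← real_inner_self_eq_norm_sq (F := E i)]; exact real_inner_smul_left (v i a) (v i a) (μ i a)
    rw [happly i a, h2, hvnorm i a] at h1
    simpa using h1
  have hdetA : ∀ i, LinearMap.det (A i) = ∏ a, μ i a := by
    intro i
    rw [← LinearMap.det_toMatrix (v i).toBasis]
    have hmat : LinearMap.toMatrix (v i).toBasis (v i).toBasis (A i)
        = Matrix.diagonal (μ i) := by
      ext a b
      rw [LinearMap.toMatrix_apply, OrthonormalBasis.coe_toBasis, happly i b, _root_.map_smul,
        Finsupp.smul_apply, OrthonormalBasis.coe_toBasis_repr_apply,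
        OrthonormalBasis.repr_self, Matrix.diagonal_apply]
      by_cases h : a = b
      · subst h; simp
      · simp [EuclideanSpace.single_apply, h, Ne.symm h]
    rw [hmat, Matrix.det_diagonal]
  -- the index type and matrix
  set u : ((i : Fin k) × Fin (d i)) → EuclideanSpace ℝ (Fin n) :=
    fun j => (v j.1 j.2 : EuclideanSpace ℝ (Fin n)) with hu
  set l : ((i : Fin k) × Fin (d i)) → ℝ := fun j => μ j.1 j.2 with hl
  set M : Matrix (Fin n) ((i : Fin k) × Fin (d i)) ℝ :=
    fun x j => Real.sqrt (c j.1) * u j x with hM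
  set e : Fin n → EuclideanSpace ℝ (Fin n) := fun x => EuclideanSpace.single x (1:ℝ) with he
  have hsumcoord : ∀ {m : ℕ} (r : Fin m → ℝ) (z : Fin m → EuclideanSpace ℝ (Fin n)) (x : Fin n),
      (∑ a, r a • z a) x = ∑ a, r a * z a x := by
    intro m r z x
    rw [WithLp.ofLp_sum, Finset.sum_apply]
    rfl
  have hcoorde : ∀ (w : EuclideanSpace ℝ (Fin n)) (y : Fin n), ⟪w, e y⟫ = w y := by
    intro w y
    simp [he, EuclideanSpace.inner_single_right]
  -- coordinates of the projection
  have hPcoord : ∀ (i : Fin k) (x y : Fin n),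
      ((Submodule.orthogonalProjectionOnto (E i) (e y) : EuclideanSpace ℝ (Fin n))) x
        = ∑ a, u ⟨i, a⟩ y * u ⟨i, a⟩ x := by
    intro i x y
    rw [(v i).orthogonalProjectionOnto_apply_eq_sum (e y)]
    rw [Submodule.coe_sum]
    have h1 : ∀ a : Fin (d i),
        ((⟪(v i a : EuclideanSpace ℝ (Fin n)), e y⟫ • v i a : E i) : EuclideanSpace ℝ (Fin n))
          = u ⟨i, a⟩ y • u ⟨i, a⟩ := by
      intro a
      rw [Submodule.coe_smul, hcoorde]
    rw [Finset.sum_congr rfl fun a _ => h1 a]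
    rw [WithLp.ofLp_sum, Finset.sum_apply]
    rfl
  -- coordinates of A i applied to the projection
  have hAPcoord : ∀ (i : Fin k) (x y : Fin n),
      ((A i (Submodule.orthogonalProjectionOnto (E i) (e y)) : EuclideanSpace ℝ (Fin n))) x
        = ∑ a, u ⟨i, a⟩ y * (μ i a * u ⟨i, a⟩ x) := by
    intro i x y
    rw [(v i).orthogonalProjectionOnto_apply_eq_sum (e y), map_sum]
    have h1 : ∀ a : Fin (d i),
        ((A i (⟪(v i a : EuclideanSpace ℝ (Fin n)), e y⟫ • v i a) : E i)
          : EuclideanSpace ℝ (Fin n))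
          = u ⟨i, a⟩ y • (μ i a • u ⟨i, a⟩) := by
      intro a
      rw [_root_.map_smul, happly i a, hcoorde]
      push_cast
      rfl
    rw [Submodule.coe_sum, Finset.sum_congr rfl fun a _ => h1 a]
    rw [WithLp.ofLp_sum, Finset.sum_apply]
    rfl
  have hMMt : M * Mᵀ = 1 := by
    ext x y
    rw [Matrix.mul_apply]
    have h1 : ∀ j : (i : Fin k) × Fin (d i), M x j * Mᵀ j y
        = c j.1 * (u j y * u j x) := by
      intro j
      rw [Matrix.transpose_apply, hM]
      simp only
      rw [mul_mul_mul_comm, Real.mul_self_sqrt (hc j.1).le]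
      ring
    rw [Finset.sum_congr rfl fun j _ => h1 j, ← Finset.univ_sigma_univ, Finset.sum_sigma]
    have h2 : ∀ i : Fin k, ∑ a : Fin (d i), c i * (u ⟨i, a⟩ y * u ⟨i, a⟩ x)
        = c i * ((Submodule.orthogonalProjectionOnto (E i) (e y) : EuclideanSpace ℝ (Fin n))) x := by
      intro i
      rw [hPcoord i x y, Finset.mul_sum]
    rw [Finset.sum_congr rfl fun i _ => h2 i]
    have h3 : ∑ i : Fin k, c i * ((Submodule.orthogonalProjectionOnto (E i) (e y)
        : EuclideanSpace ℝ (Fin n))) x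
        = (∑ i, c i • ((Submodule.orthogonalProjectionOnto (E i) (e y) : EuclideanSpace ℝ (Fin n)))) x := by
      rw [WithLp.ofLp_sum, Finset.sum_apply]
      rfl
    rw [h3, hBL (e y)]
    rw [Matrix.one_apply]
    simp [he, EuclideanSpace.single_apply]
  set B : Module.Basis (Fin n) ℝ (EuclideanSpace ℝ (Fin n)) :=
    (EuclideanSpace.basisFun (Fin n) ℝ).toBasis with hB
  have hTmat : LinearMap.toMatrix B B T = M * (Matrix.diagonal l * Mᵀ) := by
    ext x y
    have hBy : B y = e y := by
      rw [hB, OrthonormalBasis.coe_toBasis, EuclideanSpace.basisFun_apply]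
    rw [LinearMap.toMatrix_apply, hBy, hB, OrthonormalBasis.coe_toBasis_repr_apply,
      EuclideanSpace.basisFun_repr]
    have hTy : T (e y) = ∑ i, c i • ((A i (Submodule.orthogonalProjectionOnto (E i) (e y))
        : EuclideanSpace ℝ (Fin n))) := by
      rw [hT]
      simp [LinearMap.sum_apply, LinearMap.smul_apply, LinearMap.comp_apply,
        Submodule.coe_subtype, ContinuousLinearMap.coe_coe]
    rw [hTy, WithLp.ofLp_sum, Finset.sum_apply]
    have h4 : ∀ i : Fin k, (c i • ((A i (Submodule.orthogonalProjectionOnto (E i) (e y))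
        : EuclideanSpace ℝ (Fin n)))) x
        = ∑ a : Fin (d i), c i * (u ⟨i, a⟩ y * (μ i a * u ⟨i, a⟩ x)) := by
      intro i
      have : (c i • ((A i (Submodule.orthogonalProjectionOnto (E i) (e y))
          : EuclideanSpace ℝ (Fin n)))) x
          = c i * ((A i (Submodule.orthogonalProjectionOnto (E i) (e y))
          : EuclideanSpace ℝ (Fin n))) x := rfl
      rw [this, hAPcoord i x y, Finset.mul_sum]
    rw [Finset.sum_congr rfl fun i _ => h4 i]
    rw [Matrix.mul_apply]
    have h5 : ∀ j : (i : Fin k) × Fin (d i), M x j * (Matrix.diagonal l * Mᵀ) j y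
        = c j.1 * (u j y * (μ j.1 j.2 * u j x)) := by
      intro j
      rw [Matrix.diagonal_mul, Matrix.transpose_apply, hM, hl]
      simp only
      rw [show Real.sqrt (c j.1) * u j x * (μ j.1 j.2 * (Real.sqrt (c j.1) * u j y))
        = (Real.sqrt (c j.1) * Real.sqrt (c j.1)) * (u j y * (μ j.1 j.2 * u j x)) by ring,
        Real.mul_self_sqrt (hc j.1).le]
    rw [Finset.sum_congr rfl fun j _ => h5 j, ← Finset.univ_sigma_univ, Finset.sum_sigma]
  have hcol : ∀ j : (i : Fin k) × Fin (d i), ∑ x, M x j ^ 2 = c j.1 := by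
    intro j
    have h1 : ∀ x : Fin n, M x j ^ 2 = c j.1 * (u j x * u j x) := by
      intro x
      rw [hM]
      simp only
      rw [mul_pow, Real.sq_sqrt (hc j.1).le]
      ring
    rw [Finset.sum_congr rfl fun x _ => h1 x, ← Finset.mul_sum]
    have h2 : ∑ x, u j x * u j x = ⟪u j, u j⟫ := by
      simp [PiLp.inner_apply, RCLike.inner_apply, conj_trivial]
      rw [EuclideanSpace.real_norm_sq_eq]
      simp [sq]
    rw [h2]
    have h3 : ⟪u j, u j⟫ = (1:ℝ) := by
      rw [hu]
      simp only
      rw [← Submodule.coe_inner, real_inner_self_eq_norm_sq, hvnorm j.1 j.2]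
      norm_num
    rw [h3, mul_one]
  have hlpos : ∀ j : (i : Fin k) × Fin (d i), 0 < l j := fun j => hμpos j.1 j.2
  have hbm := barthe_matrix M hMMt l hlpos
  have hdetT : LinearMap.det T = (M * (Matrix.diagonal l * Mᵀ)).det := by
    rw [← hTmat, LinearMap.det_toMatrix]
  rw [hdetT]
  refine le_trans (le_of_eq ?_) hbm
  rw [Finset.prod_congr rfl fun j (_ : j ∈ Finset.univ) =>
    congrArg (fun t => l j ^ t) (hcol j)]
  rw [← Finset.univ_sigma_univ, Finset.prod_sigma]
  refine Finset.prod_congr rfl fun i _ => ?_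
  rw [hdetA i, ← Real.finset_prod_rpow Finset.univ (μ i) (fun a _ => (hμpos i a).le) (c i)]
end

section
/- Let E_1,...,E_k be linear subspaces of R^n and c_1,...,c_k > 0 with ∑ c_i P_{E_i} = I_n, and let Φ be a positive definite symmetric linear map on R^n whose eigenspaces are critical subspaces. Then ∫_{R^n} sup{ ∏_{i=1}^k e^{−c_i‖Φx_i‖²} : x = ∑ c_i x_i, x_i ∈ E_i } dx = ∏_{i=1}^k (∫_{E_i} e^{−‖Φx_i‖²} dx_i)^{c_i}, i.e., the Gaussians x ↦ e^{−‖Φx‖²} are extremizers in the Geometric Barthe inequality. -/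
open scoped BigOperators
open MeasureTheory Module

section SpanEig
variable {F : Type*} [NormedAddCommGroup F] [InnerProductSpace ℝ F]

lemma eig_eq_span {m : ℕ} (b : OrthonormalBasis (Fin m) ℝ F)
    (lam : Fin m → ℝ) (T : F →ₗ[ℝ] F) (hb : ∀ j, T (b j) = lam j • b j) (μ : ℝ) :
    Module.End.eigenspace T μ = Submodule.span ℝ (b '' {j | lam j = μ}) := by
  classical
  apply le_antisymm
  · intro v hv
    have hv' : T v = μ • v := Module.End.mem_eigenspace_iff.mp hv
    have key : ∀ j, lam j ≠ μ → (b.repr v) j = 0 := by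
      intro j hj
      have e0 : T v = ∑ i, (lam i * b.repr v i) • b i := by
        conv_lhs => rw [← b.sum_repr v, map_sum]
        refine Finset.sum_congr rfl fun i _ => ?_
        rw [LinearMap.map_smul, hb i, smul_smul, mul_comm]
      have e1 : (inner ℝ (b j) (T v) : ℝ) = lam j * b.repr v j := by
        rw [e0, b.orthonormal.inner_right_fintype]
      have e2 : (inner ℝ (b j) (T v) : ℝ) = μ * b.repr v j := by
        rw [hv', inner_smul_right, b.repr_apply_apply]
      have := e1.symm.trans e2
      rcases mul_eq_mul_right_iff.mp this with h | h
      · exact absurd h hj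
      · exact h
    have hmem : (∑ j, b.repr v j • b j) ∈ Submodule.span ℝ (⇑b '' {j | lam j = μ}) := by
      apply Submodule.sum_mem
      intro j _
      by_cases h : lam j = μ
      · exact Submodule.smul_mem _ _ (Submodule.subset_span ⟨j, h, rfl⟩)
      · rw [key j h, zero_smul]; exact Submodule.zero_mem _
    rwa [b.sum_repr v] at hmem
  · rw [Submodule.span_le]
    rintro _ ⟨j, hj, rfl⟩
    exact Module.End.mem_eigenspace_iff.mpr (by rw [hb j, hj])

lemma finrank_eig_eq_card {m : ℕ} (b : OrthonormalBasis (Fin m) ℝ F)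
    (lam : Fin m → ℝ) (T : F →ₗ[ℝ] F) (hb : ∀ j, T (b j) = lam j • b j) (μ : ℝ) :
    finrank ℝ (Module.End.eigenspace T μ) =
      (Finset.univ.filter (fun j => lam j = μ)).card := by
  classical
  rw [eig_eq_span b lam T hb μ, Set.image_eq_range]
  have h2 := finrank_span_eq_card
    ((b.orthonormal.linearIndependent).comp (Subtype.val : {j | lam j = μ} → Fin m)
      Subtype.coe_injective)
  rw [show (fun j : ↥{j | lam j = μ} => b ↑j) = ⇑b ∘ (Subtype.val : {j | lam j = μ} → Fin m)
    from rfl, h2]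
  simp [Fintype.card_subtype]

end SpanEig

section BiSup
variable {V : Type*} [AddCommGroup V] [Module ℝ V] [FiniteDimensional ℝ V]

lemma finrank_biSup_eq (p : ℝ → Submodule ℝ V) (hp : iSupIndep p) (s : Finset ℝ) :
    finrank ℝ ↥(⨆ μ ∈ s, p μ) = ∑ μ ∈ s, finrank ℝ ↥(p μ) := by
  classical
  induction s using Finset.induction_on with
  | empty => simp
    | @insert a s ha ih =>
    rw [Finset.sum_insert ha, ← ih]
    have hsup : (⨆ μ ∈ insert a s, p μ) = p a ⊔ ⨆ μ ∈ s, p μ := by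
      simp [Finset.mem_insert, iSup_or, iSup_sup_eq]
    have hdisj : Disjoint (p a) (⨆ μ ∈ s, p μ) := by
      refine (hp a).mono_right ?_
      refine iSup₂_le fun μ hμ => ?_
      have hne : μ ≠ a := by rintro rfl; exact ha hμ
      exact le_iSup_of_le μ (le_iSup_of_le hne le_rfl)
    rw [hsup, ← Submodule.finrank_sup_add_finrank_inf_eq (p a) (⨆ μ ∈ s, p μ),
      hdisj.eq_bot, finrank_bot, add_zero]
end BiSup

section Gauss
variable {F : Type*} [NormedAddCommGroup F] [InnerProductSpace ℝ F]
  [FiniteDimensional ℝ F] [MeasurableSpace F] [BorelSpace F]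

lemma gauss_integral {m : ℕ} (b : OrthonormalBasis (Fin m) ℝ F)
    (lam : Fin m → ℝ) (hlam : ∀ j, 0 < lam j) (T : F →ₗ[ℝ] F)
    (hb : ∀ j, T (b j) = lam j • b j) :
    ∫ x : F, Real.exp (-‖T x‖ ^ 2) = ∏ j, (Real.sqrt Real.pi / lam j) := by
  classical
  have hrep : ∀ x : F, ‖T x‖ ^ 2 = ∑ j, (lam j * b.repr x j) ^ 2 := by
    intro x
    have e0 : T x = ∑ i, (lam i * b.repr x i) • b i := by
      conv_lhs => rw [← b.sum_repr x, map_sum]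
      refine Finset.sum_congr rfl fun i _ => ?_
      rw [LinearMap.map_smul, hb i, smul_smul, mul_comm]
    have e1 : ∀ j, b.repr (T x) j = lam j * b.repr x j := by
      intro j
      rw [e0, map_sum]
      have : (∑ i, b.repr ((lam i * b.repr x i) • b i)) j
          = ∑ i, b.repr ((lam i * b.repr x i) • b i) j := by
        rw [WithLp.ofLp_sum, Finset.sum_apply]
      rw [this]
      simp [OrthonormalBasis.repr_self, EuclideanSpace.single_apply]
    have e2 : ‖T x‖ = ‖b.repr (T x)‖ := (b.repr.norm_map _).symm
    rw [e2, EuclideanSpace.norm_eq, Real.sq_sqrt (by positivity)]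
    refine Finset.sum_congr rfl fun j _ => ?_
    rw [e1 j, Real.norm_eq_abs, sq_abs]
  have step1 : ∫ x : F, Real.exp (-‖T x‖ ^ 2) =
      ∫ y : EuclideanSpace ℝ (Fin m), Real.exp (-∑ j, (lam j * y j) ^ 2) := by
    rw [← (b.measurePreserving_repr_symm).integral_comp
      (b.measurableEquiv.symm.measurableEmbedding) (fun x => Real.exp (-‖T x‖ ^ 2))]
    refine integral_congr_ae (Filter.Eventually.of_forall fun y => ?_)
    simp only [hrep]
    congr 1
    simp
  rw [step1,
    ← ((EuclideanSpace.volume_preserving_symm_measurableEquiv_toLp (Fin m)).symm).integral_comp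
      (MeasurableEquiv.measurableEmbedding _) (fun y => Real.exp (-∑ j, (lam j * y j) ^ 2))]
  have step2 : ∀ z : Fin m → ℝ,
      Real.exp (-∑ j, (lam j * ((MeasurableEquiv.toLp 2 (Fin m → ℝ)) z) j) ^ 2)
        = ∏ j, Real.exp (-(lam j ^ 2) * (z j) ^ 2) := by
    intro z
    rw [← Real.exp_sum]
    congr 1
    rw [← Finset.sum_neg_distrib]
    refine Finset.sum_congr rfl fun j _ => ?_
    have : ((MeasurableEquiv.toLp 2 (Fin m → ℝ)) z) j = z j := rfl
    rw [this]; ring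
  calc (∫ z : Fin m → ℝ,
        Real.exp (-∑ j, (lam j * ((MeasurableEquiv.toLp 2 (Fin m → ℝ)) z) j) ^ 2))
      = ∫ z : Fin m → ℝ, ∏ j, Real.exp (-(lam j ^ 2) * (z j) ^ 2) := by
        exact integral_congr_ae (Filter.Eventually.of_forall fun z => step2 z)
    _ = ∏ j, ∫ t : ℝ, Real.exp (-(lam j ^ 2) * t ^ 2) := by
        exact MeasureTheory.integral_fintype_prod_eq_prod
          (f := fun j t => Real.exp (-(lam j ^ 2) * t ^ 2))
    _ = ∏ j, (Real.sqrt Real.pi / lam j) := by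
        refine Finset.prod_congr rfl fun j _ => ?_
        rw [integral_gaussian (lam j ^ 2), Real.sqrt_div Real.pi_pos.le,
          Real.sqrt_sq (hlam j).le]
end Gauss

set_option maxHeartbeats 4000000 in
theorem stmt14 {n k : ℕ} (E : Fin k → Submodule ℝ (EuclideanSpace ℝ (Fin n)))
    (c : Fin k → ℝ) (hc : ∀ i, 0 < c i)
    (hBL : ∀ x : EuclideanSpace ℝ (Fin n),
      ∑ i, c i • (((E i).orthogonalProjectionOnto x : EuclideanSpace ℝ (Fin n))) = x)
    (Φ : EuclideanSpace ℝ (Fin n) →ₗ[ℝ] EuclideanSpace ℝ (Fin n))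
    (hsym : ∀ x y, (inner ℝ (Φ x) y : ℝ) = inner ℝ x (Φ y))
    (hpos : ∀ x, x ≠ 0 → 0 < (inner ℝ (Φ x) x : ℝ))
    (heig : ∀ μ : ℝ, Module.End.eigenspace Φ μ ≠ ⊥ →
      IsCritical E c (Module.End.eigenspace Φ μ)) :
    (∫ x : EuclideanSpace ℝ (Fin n),
        ⨆ p : {p : Fin k → EuclideanSpace ℝ (Fin n) //
            (∀ i, p i ∈ E i) ∧ x = ∑ i, c i • p i},
          ∏ i, Real.exp (-(c i) * ‖Φ (p.1 i)‖ ^ 2)) =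
      ∏ i, (∫ y : E i, Real.exp (-‖Φ (y : EuclideanSpace ℝ (Fin n))‖ ^ 2)) ^ c i := by
  classical
  have hsym' : Φ.IsSymmetric := hsym
  have hfr : finrank ℝ (EuclideanSpace ℝ (Fin n)) = n := finrank_euclideanSpace_fin
  set b := hsym'.eigenvectorBasis hfr with hbdef
  set lam := hsym'.eigenvalues hfr with hlamdef
  have hb : ∀ j, Φ (b j) = lam j • b j := by
    intro j
    exact_mod_cast hsym'.apply_eigenvectorBasis hfr j
  have hlam : ∀ j, 0 < lam j := by
    intro j
    have hbne : b j ≠ 0 := b.toBasis.ne_zero j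
    have h1 := hpos (b j) hbne
    rw [hb j, real_inner_smul_left, real_inner_self_eq_norm_sq, b.orthonormal.1 j] at h1
    simpa using h1
  set V : ℝ → Submodule ℝ (EuclideanSpace ℝ (Fin n)) :=
    fun μ => Module.End.eigenspace Φ μ with hVdef
  set S : Finset ℝ := Finset.image lam Finset.univ with hSdef
  have hVd : ∀ μ, finrank ℝ (V μ) = (Finset.univ.filter (fun j => lam j = μ)).card :=
    fun μ => finrank_eig_eq_card b lam Φ hb μ
  have hVS : ∀ μ, V μ ≠ ⊥ ↔ μ ∈ S := by
    intro μ
    constructor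
    · intro hne
      by_contra hμ
      apply hne
      have hcard : (Finset.univ.filter (fun j => lam j = μ)).card = 0 := by
        rw [Finset.card_eq_zero, Finset.filter_eq_empty_iff]
        intro j _
        exact fun h => hμ (hSdef ▸ Finset.mem_image.mpr ⟨j, Finset.mem_univ j, h⟩)
      have : finrank ℝ (V μ) = 0 := by rw [hVd μ, hcard]
      exact Submodule.finrank_eq_zero.mp this
    · intro hμ
      obtain ⟨j, _, hj⟩ := Finset.mem_image.mp hμ
      have : b j ∈ V μ := by
        rw [hVdef]
        exact Module.End.mem_eigenspace_iff.mpr (by rw [hb j, hj])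
      intro hbot
      exact b.toBasis.ne_zero j (by rw [hbot] at this; simpa using this)
  -- trace identity
  have htrace : ∑ i, c i * (finrank ℝ (E i) : ℝ) = (n : ℝ) := by
    have hProj : ∀ i, LinearMap.IsProj (E i)
        ((E i).subtype ∘ₗ ((E i).orthogonalProjectionOnto).toLinearMap) := by
      intro i
      exact ⟨fun x => SetLike.coe_mem _, fun x hx => Submodule.starProjection_eq_self_iff.mpr hx⟩
    have hPsum : (∑ i, c i • ((E i).subtype ∘ₗ ((E i).orthogonalProjectionOnto).toLinearMap))
        = LinearMap.id := by
      refine LinearMap.ext fun x => ?_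
      simpa using hBL x
    have h1 := congrArg (LinearMap.trace ℝ (EuclideanSpace ℝ (Fin n))) hPsum
    rw [map_sum, LinearMap.trace_id, hfr] at h1
    calc ∑ i, c i * (finrank ℝ (E i) : ℝ)
        = ∑ i, (LinearMap.trace ℝ (EuclideanSpace ℝ (Fin n)))
            (c i • ((E i).subtype ∘ₗ ((E i).orthogonalProjectionOnto).toLinearMap)) := by
          refine Finset.sum_congr rfl fun i _ => ?_
          rw [_root_.map_smul, smul_eq_mul, (hProj i).trace]
      _ = (n : ℝ) := h1
  -- dimension bookkeeping
  have hind : iSupIndep V := Module.End.eigenspaces_iSupIndep Φ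
  have hindE : ∀ i, iSupIndep (fun μ => E i ⊓ V μ) :=
    fun i => hind.mono (fun μ => inf_le_right)
  have hle : ∀ i, (⨆ μ ∈ S, E i ⊓ V μ) ≤ E i :=
    fun i => iSup₂_le fun μ _ => inf_le_left
  have hcrit : ∀ μ ∈ S, ∑ i, c i * (finrank ℝ ↥(E i ⊓ V μ) : ℝ) = (finrank ℝ (V μ) : ℝ) :=
    fun μ hμ => (heig μ ((hVS μ).mpr hμ)).2
  have htopsum : ∑ μ ∈ S, (finrank ℝ (V μ) : ℝ) = (n : ℝ) := by
    have h0 : ∑ μ ∈ S, (Finset.univ.filter (fun j => lam j = μ)).card = n := by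
      have h1 := Finset.card_eq_sum_card_image lam (Finset.univ : Finset (Fin n))
      simpa using h1.symm
    have h2 : ∑ μ ∈ S, (finrank ℝ (V μ) : ℝ)
        = ((∑ μ ∈ S, (Finset.univ.filter (fun j => lam j = μ)).card : ℕ) : ℝ) := by
      rw [Nat.cast_sum]
      exact Finset.sum_congr rfl fun μ _ => by rw [hVd μ]
    rw [h2, h0]
  have heqd : ∀ i, ∑ μ ∈ S, finrank ℝ ↥(E i ⊓ V μ) = finrank ℝ (E i) := by
    have hle' : ∀ i, ((∑ μ ∈ S, finrank ℝ ↥(E i ⊓ V μ) : ℕ) : ℝ) ≤ (finrank ℝ (E i) : ℝ) := by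
      intro i
      have h3 : finrank ℝ ↥(⨆ μ ∈ S, E i ⊓ V μ) ≤ finrank ℝ (E i) :=
        Submodule.finrank_mono (hle i)
      rw [finrank_biSup_eq _ (hindE i) S] at h3
      exact_mod_cast h3
    have hsum : ∑ i, c i * ((∑ μ ∈ S, finrank ℝ ↥(E i ⊓ V μ) : ℕ) : ℝ)
        = ∑ i, c i * (finrank ℝ (E i) : ℝ) := by
      rw [htrace]
      calc ∑ i, c i * (((∑ μ ∈ S, finrank ℝ ↥(E i ⊓ V μ)) : ℕ) : ℝ)
          = ∑ i, ∑ μ ∈ S, c i * (finrank ℝ ↥(E i ⊓ V μ) : ℝ) := by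
            refine Finset.sum_congr rfl fun i _ => ?_
            rw [Nat.cast_sum, Finset.mul_sum]
        _ = ∑ μ ∈ S, ∑ i, c i * (finrank ℝ ↥(E i ⊓ V μ) : ℝ) := Finset.sum_comm
        _ = ∑ μ ∈ S, (finrank ℝ (V μ) : ℝ) := Finset.sum_congr rfl fun μ hμ => hcrit μ hμ
        _ = (n : ℝ) := htopsum
    intro i
    have hpt := (Finset.sum_eq_sum_iff_of_le
      (fun i _ => mul_le_mul_of_nonneg_left (hle' i) (hc i).le)).mp hsum i (Finset.mem_univ i)
    have := mul_left_cancel₀ (hc i).ne' hpt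
    exact_mod_cast this
  have hEdec : ∀ i, (⨆ μ ∈ S, E i ⊓ V μ) = E i := by
    intro i
    refine Submodule.eq_of_le_of_finrank_eq (hle i) ?_
    rw [finrank_biSup_eq _ (hindE i) S, heqd i]
  -- invariance
  have hinv : ∀ i, ∀ x ∈ E i, Φ x ∈ E i := by
    intro i x hx
    rw [← hEdec i] at hx ⊢
    have hmap : Submodule.map Φ (⨆ μ ∈ S, E i ⊓ V μ) ≤ ⨆ μ ∈ S, E i ⊓ V μ := by
      rw [Submodule.map_iSup]
      refine iSup_le fun μ => ?_
      rw [Submodule.map_iSup]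
      refine iSup_le fun hμ => le_iSup_of_le μ (le_iSup_of_le hμ ?_)
      rintro z hz
      obtain ⟨y, hy, rfl⟩ := Submodule.mem_map.mp hz
      obtain ⟨hyE, hyV⟩ := Submodule.mem_inf.mp hy
      have hy' : Φ y = μ • y := Module.End.mem_eigenspace_iff.mp hyV
      exact Submodule.mem_inf.mpr ⟨by rw [hy']; exact Submodule.smul_mem _ _ hyE,
        by rw [hy']; exact Submodule.smul_mem _ _ hyV⟩
    exact hmap (Submodule.mem_map_of_mem hx)
  have hperp : ∀ i, ∀ x ∈ (E i)ᗮ, Φ x ∈ (E i)ᗮ := by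
    intro i x hx
    rw [Submodule.mem_orthogonal]
    intro u hu
    rw [← hsym u x]
    exact hx (Φ u) (hinv i u hu)
  have hcomm : ∀ i x, (((E i).orthogonalProjectionOnto (Φ x)) : EuclideanSpace ℝ (Fin n))
      = Φ ((E i).orthogonalProjectionOnto x) := by
    intro i x
    have hxd : Φ x = Φ ↑((E i).orthogonalProjectionOnto x)
        + Φ (x - ↑((E i).orthogonalProjectionOnto x)) := by
      rw [← map_add]
      congr 1
      abel
    rw [hxd, map_add, Submodule.coe_add,
      (show (((E i).orthogonalProjectionOnto (Φ ↑((E i).orthogonalProjectionOnto x)) :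
          EuclideanSpace ℝ (Fin n)) = Φ ↑((E i).orthogonalProjectionOnto x)) from
        Submodule.starProjection_eq_self_iff.mpr (hinv i _ (SetLike.coe_mem _))),
      Submodule.orthogonalProjectionOnto_apply_of_mem_orthogonal
        (v := Φ (x - ↑((E i).orthogonalProjectionOnto x)))
        (hperp i _ (Submodule.sub_starProjection_mem_orthogonal (K := E i) x))]
    simp
  have hproj_norm : ∀ x : EuclideanSpace ℝ (Fin n),
      ∑ i, c i * ‖(((E i).orthogonalProjectionOnto x) : EuclideanSpace ℝ (Fin n))‖ ^ 2 = ‖x‖ ^ 2 := by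
    intro x
    have key : ∀ i, (inner ℝ ((((E i).orthogonalProjectionOnto x) : EuclideanSpace ℝ (Fin n))) x : ℝ)
        = ‖(((E i).orthogonalProjectionOnto x) : EuclideanSpace ℝ (Fin n))‖ ^ 2 := by
      intro i
      have h0 : (inner ℝ ((((E i).orthogonalProjectionOnto x) : EuclideanSpace ℝ (Fin n)))
          (x - ↑((E i).orthogonalProjectionOnto x)) : ℝ) = 0 := by
        exact (Submodule.mem_orthogonal _ _).mp
          (Submodule.sub_starProjection_mem_orthogonal (K := E i) x) _ (SetLike.coe_mem _)
      have h1 : (inner ℝ ((((E i).orthogonalProjectionOnto x) : EuclideanSpace ℝ (Fin n))) x : ℝ)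
          = (inner ℝ ((((E i).orthogonalProjectionOnto x) : EuclideanSpace ℝ (Fin n)))
              ((↑((E i).orthogonalProjectionOnto x) : EuclideanSpace ℝ (Fin n))
                + (x - ↑((E i).orthogonalProjectionOnto x))) : ℝ) := by
        congr 1
        abel
      rw [h1, inner_add_right, h0, add_zero, real_inner_self_eq_norm_sq]
    have h2 := congrArg (fun z => (inner ℝ z x : ℝ)) (hBL x)
    simp only [sum_inner, real_inner_smul_left] at h2
    rw [show (‖x‖ : ℝ) ^ 2 = (inner ℝ x x : ℝ) from (real_inner_self_eq_norm_sq x).symm, ← h2]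
    exact Finset.sum_congr rfl fun i _ => by rw [key i]
  -- the supremum computation
  have hsup : ∀ x : EuclideanSpace ℝ (Fin n),
      (⨆ p : {p : Fin k → EuclideanSpace ℝ (Fin n) //
            (∀ i, p i ∈ E i) ∧ x = ∑ i, c i • p i},
          ∏ i, Real.exp (-(c i) * ‖Φ (p.1 i)‖ ^ 2)) = Real.exp (-‖Φ x‖ ^ 2) := by
    intro x
    have hub : ∀ p : {p : Fin k → EuclideanSpace ℝ (Fin n) //
            (∀ i, p i ∈ E i) ∧ x = ∑ i, c i • p i},
        (∏ i, Real.exp (-(c i) * ‖Φ (p.1 i)‖ ^ 2)) ≤ Real.exp (-‖Φ x‖ ^ 2) := by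
      rintro ⟨p, hmem, hx⟩
      rw [← Real.exp_sum]
      apply Real.exp_le_exp.mpr
      have hbd : ‖Φ x‖ ^ 2 ≤ ∑ i, c i * ‖Φ (p i)‖ ^ 2 := by
        by_cases hΦx : Φ x = 0
        · rw [hΦx, norm_zero]
          rw [show ((0:ℝ) ^ 2) = 0 from by norm_num]
          exact Finset.sum_nonneg fun i _ => mul_nonneg (hc i).le (sq_nonneg _)
        · set A := ‖Φ x‖ ^ 2 with hA
          have hA0 : 0 < A := by
            rw [hA]
            exact pow_pos (norm_pos_iff.mpr hΦx) 2
          set s := ∑ i, c i * (‖(↑((E i).orthogonalProjectionOnto (Φ x)) :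
              EuclideanSpace ℝ (Fin n))‖ * ‖Φ (p i)‖) with hs
          have step1 : A ≤ s := by
            have e1 : Φ x = ∑ i, c i • Φ (p i) := by
              conv_lhs => rw [hx]
              rw [map_sum]
              exact Finset.sum_congr rfl fun i _ => by rw [LinearMap.map_smul]
            have e2 := congrArg (fun z => (inner ℝ (Φ x) z : ℝ)) e1
            simp only [inner_sum, real_inner_smul_right] at e2
            have e3 : ∀ i, (inner ℝ (Φ x) (Φ (p i)) : ℝ)
                = inner ℝ (↑((E i).orthogonalProjectionOnto (Φ x)) :
                    EuclideanSpace ℝ (Fin n)) (Φ (p i)) := by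
              intro i
              have h0 : (inner ℝ (Φ x - ↑((E i).orthogonalProjectionOnto (Φ x))) (Φ (p i)) : ℝ) = 0 := by
                rw [real_inner_comm]
                exact (Submodule.mem_orthogonal _ _).mp
                  (Submodule.sub_starProjection_mem_orthogonal (K := E i) (Φ x)) _ (hinv i _ (hmem i))
              rw [inner_sub_left] at h0
              linarith
            have e4 : A = ∑ i, c i * (inner ℝ (↑((E i).orthogonalProjectionOnto (Φ x)) :
                EuclideanSpace ℝ (Fin n)) (Φ (p i)) : ℝ) := by
              rw [hA, ← real_inner_self_eq_norm_sq, e2]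
              exact Finset.sum_congr rfl fun i _ => by rw [e3 i]
            rw [e4, hs]
            refine Finset.sum_le_sum fun i _ => ?_
            exact mul_le_mul_of_nonneg_left (real_inner_le_norm _ _) (hc i).le
          have step3 : s ^ 2 ≤ A * (∑ i, c i * ‖Φ (p i)‖ ^ 2) := by
            have hcs := Finset.sum_mul_sq_le_sq_mul_sq Finset.univ
              (fun i => Real.sqrt (c i) * ‖(↑((E i).orthogonalProjectionOnto (Φ x)) :
                EuclideanSpace ℝ (Fin n))‖)
              (fun i => Real.sqrt (c i) * ‖Φ (p i)‖)
            have hr1 : ∑ i, (Real.sqrt (c i) * ‖(↑((E i).orthogonalProjectionOnto (Φ x)) :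
                EuclideanSpace ℝ (Fin n))‖) * (Real.sqrt (c i) * ‖Φ (p i)‖) = s := by
              rw [hs]
              refine Finset.sum_congr rfl fun i _ => ?_
              have h := Real.mul_self_sqrt (hc i).le
              calc (Real.sqrt (c i) * ‖(↑((E i).orthogonalProjectionOnto (Φ x)) :
                  EuclideanSpace ℝ (Fin n))‖) * (Real.sqrt (c i) * ‖Φ (p i)‖)
                  = (Real.sqrt (c i) * Real.sqrt (c i)) *
                    (‖(↑((E i).orthogonalProjectionOnto (Φ x)) :
                      EuclideanSpace ℝ (Fin n))‖ * ‖Φ (p i)‖) := by ring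
                _ = c i * (‖(↑((E i).orthogonalProjectionOnto (Φ x)) :
                      EuclideanSpace ℝ (Fin n))‖ * ‖Φ (p i)‖) := by rw [h]
            have hr2 : ∑ i, (Real.sqrt (c i) * ‖(↑((E i).orthogonalProjectionOnto (Φ x)) :
                EuclideanSpace ℝ (Fin n))‖) ^ 2 = A := by
              rw [hA, ← hproj_norm (Φ x)]
              refine Finset.sum_congr rfl fun i _ => ?_
              rw [mul_pow, Real.sq_sqrt (hc i).le]
            have hr3 : ∑ i, (Real.sqrt (c i) * ‖Φ (p i)‖) ^ 2
                = ∑ i, c i * ‖Φ (p i)‖ ^ 2 := by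
              refine Finset.sum_congr rfl fun i _ => ?_
              rw [mul_pow, Real.sq_sqrt (hc i).le]
            rw [hr1, hr2, hr3] at hcs
            exact hcs
          have hB0 : 0 ≤ ∑ i, c i * ‖Φ (p i)‖ ^ 2 :=
            Finset.sum_nonneg fun i _ => mul_nonneg (hc i).le (sq_nonneg _)
          nlinarith [step1, step3, hA0, hB0]
      have : ∑ i, -(c i) * ‖Φ (p i)‖ ^ 2 = -(∑ i, c i * ‖Φ (p i)‖ ^ 2) := by
        rw [← Finset.sum_neg_distrib]
        exact Finset.sum_congr rfl fun i _ => by ring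
      rw [this]
      exact neg_le_neg hbd
    have hval : (∏ i, Real.exp (-(c i) *
        ‖Φ (((E i).orthogonalProjectionOnto x : EuclideanSpace ℝ (Fin n)))‖ ^ 2))
        = Real.exp (-‖Φ x‖ ^ 2) := by
      rw [← Real.exp_sum]
      congr 1
      have h5 : ∑ i, -(c i) * ‖Φ (((E i).orthogonalProjectionOnto x :
          EuclideanSpace ℝ (Fin n)))‖ ^ 2
          = -(∑ i, c i * ‖(↑((E i).orthogonalProjectionOnto (Φ x)) :
              EuclideanSpace ℝ (Fin n))‖ ^ 2) := by
        rw [← Finset.sum_neg_distrib]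
        refine Finset.sum_congr rfl fun i _ => ?_
        rw [hcomm i x]
        ring
      rw [h5, hproj_norm (Φ x)]
    haveI : Nonempty {p : Fin k → EuclideanSpace ℝ (Fin n) //
        (∀ i, p i ∈ E i) ∧ x = ∑ i, c i • p i} :=
      ⟨⟨fun i => ↑((E i).orthogonalProjectionOnto x), fun i => SetLike.coe_mem _, (hBL x).symm⟩⟩
    refine le_antisymm (ciSup_le hub) ?_
    have hbdd : BddAbove (Set.range (fun p : {p : Fin k → EuclideanSpace ℝ (Fin n) //
        (∀ i, p i ∈ E i) ∧ x = ∑ i, c i • p i} =>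
          ∏ i, Real.exp (-(c i) * ‖Φ (p.1 i)‖ ^ 2))) := by
      refine ⟨Real.exp (-‖Φ x‖ ^ 2), ?_⟩
      rintro y ⟨p, rfl⟩
      exact hub p
    exact hval.symm.le.trans (le_ciSup hbdd
      ⟨fun i => ↑((E i).orthogonalProjectionOnto x), fun i => SetLike.coe_mem _, (hBL x).symm⟩)
  -- rewrite LHS
  have hLHS : (∫ x : EuclideanSpace ℝ (Fin n),
        ⨆ p : {p : Fin k → EuclideanSpace ℝ (Fin n) //
            (∀ i, p i ∈ E i) ∧ x = ∑ i, c i • p i},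
          ∏ i, Real.exp (-(c i) * ‖Φ (p.1 i)‖ ^ 2))
      = ∏ j, (Real.sqrt Real.pi / lam j) := by
    rw [show (fun x : EuclideanSpace ℝ (Fin n) =>
        ⨆ p : {p : Fin k → EuclideanSpace ℝ (Fin n) //
            (∀ i, p i ∈ E i) ∧ x = ∑ i, c i • p i},
          ∏ i, Real.exp (-(c i) * ‖Φ (p.1 i)‖ ^ 2))
      = fun x => Real.exp (-‖Φ x‖ ^ 2) from funext hsup]
    exact gauss_integral b lam hlam Φ hb
  -- restriction of Φ to each E i
  have hTsym : ∀ i, ((Φ.restrict (hinv i)) : ↥(E i) →ₗ[ℝ] ↥(E i)).IsSymmetric := by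
    intro i u v
    have h := hsym ↑u ↑v
    simpa [Submodule.coe_inner, LinearMap.restrict_coe_apply] using h
  have hbi : ∀ i j, (Φ.restrict (hinv i)) ((hTsym i).eigenvectorBasis rfl j)
      = (hTsym i).eigenvalues rfl j • (hTsym i).eigenvectorBasis rfl j := by
    intro i j
    exact_mod_cast (hTsym i).apply_eigenvectorBasis rfl j
  have hcoe_e : ∀ i j, Φ ↑((hTsym i).eigenvectorBasis rfl j)
      = (hTsym i).eigenvalues rfl j • ↑((hTsym i).eigenvectorBasis rfl j) := by
    intro i j
    have h := congrArg (Subtype.val) (hbi i j)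
    rw [LinearMap.restrict_coe_apply] at h
    simpa using h
  have hnu : ∀ i j, 0 < (hTsym i).eigenvalues rfl j := by
    intro i j
    have hne : ((hTsym i).eigenvectorBasis rfl j : EuclideanSpace ℝ (Fin n)) ≠ 0 := by
      intro h0
      exact ((hTsym i).eigenvectorBasis rfl).toBasis.ne_zero j (Subtype.ext h0)
    have h1 := hpos _ hne
    rw [hcoe_e i j, real_inner_smul_left, real_inner_self_eq_norm_sq] at h1
    have hno : ‖((hTsym i).eigenvectorBasis rfl j : EuclideanSpace ℝ (Fin n))‖ = 1 := by
      have := ((hTsym i).eigenvectorBasis rfl).orthonormal.1 j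
      exact this
    rw [hno] at h1
    simpa using h1
  have hRHS : ∀ i, (∫ y : E i, Real.exp (-‖Φ (y : EuclideanSpace ℝ (Fin n))‖ ^ 2))
      = ∏ j, (Real.sqrt Real.pi / (hTsym i).eigenvalues rfl j) := by
    intro i
    have hnorm : ∀ y : ↥(E i), ‖Φ ↑y‖ = ‖(Φ.restrict (hinv i)) y‖ := by
      intro y
      rw [show ‖(Φ.restrict (hinv i)) y‖
        = ‖((Φ.restrict (hinv i) y : ↥(E i)) : EuclideanSpace ℝ (Fin n))‖ from rfl,
        LinearMap.restrict_coe_apply]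
    rw [show (fun y : ↥(E i) => Real.exp (-‖Φ (y : EuclideanSpace ℝ (Fin n))‖ ^ 2))
      = (fun y : ↥(E i) => Real.exp (-‖(Φ.restrict (hinv i)) y‖ ^ 2))
      from funext fun y => by rw [hnorm y]]
    exact gauss_integral ((hTsym i).eigenvectorBasis rfl) ((hTsym i).eigenvalues rfl)
      (hnu i) (Φ.restrict (hinv i)) (hbi i)
  have hfib : ∀ i μ, (Finset.univ.filter (fun j => (hTsym i).eigenvalues rfl j = μ)).card
      = finrank ℝ ↥(E i ⊓ V μ) := by
    intro i μ
    rw [← finrank_eig_eq_card ((hTsym i).eigenvectorBasis rfl) ((hTsym i).eigenvalues rfl)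
      (Φ.restrict (hinv i)) (hbi i) μ]
    have hE : Module.End.eigenspace (Φ.restrict (hinv i)) μ
        = Submodule.comap (E i).subtype (E i ⊓ V μ) := by
      ext y
      rw [Module.End.mem_eigenspace_iff, Submodule.mem_comap, Submodule.mem_inf]
      constructor
      · intro h
        refine ⟨SetLike.coe_mem _, ?_⟩
        have h2 := congrArg (Subtype.val) h
        rw [LinearMap.restrict_coe_apply] at h2
        exact Module.End.mem_eigenspace_iff.mpr (by simpa using h2)
      · rintro ⟨-, hV2⟩
        have hΦy : Φ ↑y = μ • (y : EuclideanSpace ℝ (Fin n)) :=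
          Module.End.mem_eigenspace_iff.mp hV2
        apply Subtype.ext
        rw [LinearMap.restrict_coe_apply]
        simpa using hΦy
    rw [hE]
    exact (Submodule.comapSubtypeEquivOfLe inf_le_left).finrank_eq
  have hnuS : ∀ i j, (hTsym i).eigenvalues rfl j ∈ S := by
    intro i j
    refine (hVS _).mp ?_
    have hvec : ((hTsym i).eigenvectorBasis rfl j : EuclideanSpace ℝ (Fin n))
        ∈ V ((hTsym i).eigenvalues rfl j) :=
      Module.End.mem_eigenspace_iff.mpr (hcoe_e i j)
    intro hbot
    rw [hbot, Submodule.mem_bot] at hvec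
    exact ((hTsym i).eigenvectorBasis rfl).toBasis.ne_zero j (Subtype.ext hvec)
  -- put everything together
  rw [hLHS]
  have hstep : ∏ i, (∫ y : E i, Real.exp (-‖Φ (y : EuclideanSpace ℝ (Fin n))‖ ^ 2)) ^ c i
      = ∏ i, (∏ j, (Real.sqrt Real.pi / (hTsym i).eigenvalues rfl j)) ^ c i :=
    Finset.prod_congr rfl fun i _ => by rw [hRHS i]
  rw [hstep]
  have hgp : ∀ μ : ℝ, 0 < μ → 0 < Real.sqrt Real.pi / μ :=
    fun μ h => div_pos (Real.sqrt_pos.mpr Real.pi_pos) h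
  have hLpos : 0 < ∏ j, Real.sqrt Real.pi / lam j :=
    Finset.prod_pos fun j _ => hgp _ (hlam j)
  have hiRpos : ∀ i, 0 < ∏ j, Real.sqrt Real.pi / (hTsym i).eigenvalues rfl j :=
    fun i => Finset.prod_pos fun j _ => hgp _ (hnu i j)
  have hRpos : 0 < ∏ i, (∏ j, Real.sqrt Real.pi / (hTsym i).eigenvalues rfl j) ^ c i :=
    Finset.prod_pos fun i _ => Real.rpow_pos_of_pos (hiRpos i) _
  rw [← Real.exp_log hLpos, ← Real.exp_log hRpos]
  congr 1
  rw [Real.log_prod fun j _ => (hgp _ (hlam j)).ne',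
    Real.log_prod fun i _ => (Real.rpow_pos_of_pos (hiRpos i) _).ne']
  have hgrpL : ∑ j, Real.log (Real.sqrt Real.pi / lam j)
      = ∑ μ ∈ S, (finrank ℝ (V μ) : ℝ) * Real.log (Real.sqrt Real.pi / μ) := by
    rw [← Finset.sum_fiberwise_of_maps_to (s := Finset.univ) (t := S) (g := lam)
      (fun j _ => Finset.mem_image.mpr ⟨j, Finset.mem_univ j, rfl⟩)
      (fun j => Real.log (Real.sqrt Real.pi / lam j))]
    refine Finset.sum_congr rfl fun μ hμ => ?_
    have h8 : ∀ j ∈ Finset.univ.filter (fun j => lam j = μ),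
        Real.log (Real.sqrt Real.pi / lam j) = Real.log (Real.sqrt Real.pi / μ) := by
      intro j hj
      rw [(Finset.mem_filter.mp hj).2]
    rw [Finset.sum_congr rfl h8, Finset.sum_const, nsmul_eq_mul, hVd μ]
  have hgrpR : ∀ i, Real.log
      ((∏ j, Real.sqrt Real.pi / (hTsym i).eigenvalues rfl j) ^ c i)
      = c i * ∑ μ ∈ S, (finrank ℝ ↥(E i ⊓ V μ) : ℝ) * Real.log (Real.sqrt Real.pi / μ) := by
    intro i
    rw [Real.log_rpow (hiRpos i), Real.log_prod fun j _ => (hgp _ (hnu i j)).ne']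
    congr 1
    rw [← Finset.sum_fiberwise_of_maps_to (s := Finset.univ) (t := S)
      (g := (hTsym i).eigenvalues rfl) (fun j _ => hnuS i j)
      (fun j => Real.log (Real.sqrt Real.pi / (hTsym i).eigenvalues rfl j))]
    refine Finset.sum_congr rfl fun μ hμ => ?_
    have h9 : ∀ j ∈ Finset.univ.filter (fun j => (hTsym i).eigenvalues rfl j = μ),
        Real.log (Real.sqrt Real.pi / (hTsym i).eigenvalues rfl j)
          = Real.log (Real.sqrt Real.pi / μ) := by
      intro j hj
      rw [(Finset.mem_filter.mp hj).2]
    rw [Finset.sum_congr rfl h9, Finset.sum_const, nsmul_eq_mul, hfib i μ]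
  rw [hgrpL]
  rw [show (∑ i, Real.log ((∏ j, Real.sqrt Real.pi / (hTsym i).eigenvalues rfl j) ^ c i))
    = ∑ i, c i * ∑ μ ∈ S, (finrank ℝ ↥(E i ⊓ V μ) : ℝ) * Real.log (Real.sqrt Real.pi / μ)
    from Finset.sum_congr rfl fun i _ => hgrpR i]
  calc ∑ μ ∈ S, (finrank ℝ (V μ) : ℝ) * Real.log (Real.sqrt Real.pi / μ)
      = ∑ μ ∈ S, ∑ i, c i * ((finrank ℝ ↥(E i ⊓ V μ) : ℝ)
          * Real.log (Real.sqrt Real.pi / μ)) := by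
        refine Finset.sum_congr rfl fun μ hμ => ?_
        rw [← hcrit μ hμ, Finset.sum_mul]
        exact Finset.sum_congr rfl fun i _ => by ring
    _ = ∑ i, ∑ μ ∈ S, c i * ((finrank ℝ ↥(E i ⊓ V μ) : ℝ)
          * Real.log (Real.sqrt Real.pi / μ)) := Finset.sum_comm
    _ = ∑ i, c i * ∑ μ ∈ S, (finrank ℝ ↥(E i ⊓ V μ) : ℝ)
          * Real.log (Real.sqrt Real.pi / μ) := by
        refine Finset.sum_congr rfl fun i _ => ?_
        rw [Finset.mul_sum]
end

section
/- If a Gaussian probability density g and a positive Hölder-continuous probability density f on R^n satisfy f ≤ c·g for some constant c > 0, then the Brenier map T : R^n → R^n pushing forward the measure with density g to the measure with density f has linear growth, i.e., there is a constant C with ‖T(x)‖ ≤ C√(1+‖x‖²) for all x. -/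
set_option maxHeartbeats 1000000

open scoped BigOperators RealInnerProductSpace
open MeasureTheory
open scoped RealInnerProductSpace
open MeasureTheory

theorem subgrad_ineq {E : Type*} [NormedAddCommGroup E] [InnerProductSpace ℝ E] [CompleteSpace E]
    (φ : E → ℝ) (hφ : ConvexOn ℝ Set.univ φ) (T : E → E)
    (hgrad : ∀ x, HasGradientAt φ (T x) x) (x y : E) :
    ⟪T x, y - x⟫ ≤ φ y - φ x := by
  have hline : HasDerivAt (fun t : ℝ => φ (x + t • (y - x))) ⟪T x, y - x⟫ 0 := by
    have h1 : HasDerivAt (fun t : ℝ => x + t • (y - x)) (y - x) 0 := by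
      simpa using ((hasDerivAt_id (0:ℝ)).smul_const (y - x)).const_add x
    have h2 := (hgrad x).hasFDerivAt
    rw [show x = x + (0:ℝ) • (y - x) by simp] at h2
    have := h2.comp_hasDerivAt (0:ℝ) h1
    simp [InnerProductSpace.toDual] at this
    exact this
  have hψ : ConvexOn ℝ Set.univ (fun t : ℝ => φ (x + t • (y - x))) := by
    have := hφ.comp_affineMap (AffineMap.lineMap x y)
    have heq : (fun t : ℝ => φ (x + t • (y - x))) = φ ∘ ⇑(AffineMap.lineMap x y) := by
      funext t; rw [Function.comp_apply, AffineMap.lineMap_apply]; rw [add_comm]; congr 1; try module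
    rw [heq]
    simpa using this
  have := hψ.le_slope_of_hasDerivAt (Set.mem_univ (0:ℝ)) (Set.mem_univ (1:ℝ)) one_pos hline
  simpa [slope_def_field] using this

theorem grad_mono {E : Type*} [NormedAddCommGroup E] [InnerProductSpace ℝ E] [CompleteSpace E]
    (φ : E → ℝ) (hφ : ConvexOn ℝ Set.univ φ) (T : E → E)
    (hgrad : ∀ x, HasGradientAt φ (T x) x) (x y : E) :
    0 ≤ ⟪T y - T x, y - x⟫ := by
  have h1 := subgrad_ineq φ hφ T hgrad x y
  have h2 := subgrad_ineq φ hφ T hgrad y x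
  have : ⟪T y, x - y⟫ = -⟪T y, y - x⟫ := by rw [← inner_neg_right, neg_sub]
  rw [inner_sub_left]
  rw [this] at h2
  linarith
open scoped RealInnerProductSpace
open MeasureTheory

theorem T_meas {n : ℕ} (φ : EuclideanSpace ℝ (Fin n) → ℝ)
    (T : EuclideanSpace ℝ (Fin n) → EuclideanSpace ℝ (Fin n))
    (hgrad : ∀ x, HasGradientAt φ (T x) x) : Measurable T := by
  have hφc : Continuous φ := by
    rw [continuous_iff_continuousAt]
    exact fun x => (hgrad x).hasFDerivAt.continuousAt
  -- inner products with fixed vector are measurable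
  have key : ∀ v : EuclideanSpace ℝ (Fin n), Measurable (fun x => ⟪T x, v⟫) := by
    intro v
    have happrox : ∀ k : ℕ, Measurable (fun x : EuclideanSpace ℝ (Fin n) =>
        ((k:ℝ)+1) * (φ (x + ((k:ℝ)+1)⁻¹ • v) - φ x)) := by
      intro k
      exact (measurable_const.mul ((hφc.comp (by fun_prop)).sub hφc).measurable)
    apply measurable_of_tendsto_metrizable' Filter.atTop happrox
    rw [tendsto_pi_nhds]
    intro x
    have hline : HasDerivAt (fun t : ℝ => φ (x + t • v)) ⟪T x, v⟫ 0 := by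
      have h1 : HasDerivAt (fun t : ℝ => x + t • v) v 0 := by
        simpa using ((hasDerivAt_id (0:ℝ)).smul_const v).const_add x
      have h2 := (hgrad x).hasFDerivAt
      rw [show x = x + (0:ℝ) • v by simp] at h2
      have := h2.comp_hasDerivAt (0:ℝ) h1
      simp [InnerProductSpace.toDual] at this
      exact this
    have hslope := hasDerivAt_iff_tendsto_slope.mp hline
    have hseq : Filter.Tendsto (fun k : ℕ => ((k:ℝ)+1)⁻¹) Filter.atTop (nhdsWithin 0 {(0:ℝ)}ᶜ) := by
      apply tendsto_nhdsWithin_of_tendsto_nhds_of_eventually_within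
      · exact tendsto_one_div_add_atTop_nhds_zero_nat.congr (by intro k; simp [one_div])
      · filter_upwards with k
        simp only [Set.mem_compl_iff, Set.mem_singleton_iff]
        positivity
    have := hslope.comp hseq
    convert this using 2 with k
    simp only [Function.comp_apply, slope_def_field, div_eq_inv_mul, sub_zero, inv_inv,
      zero_smul, add_zero]
  -- now coordinates
  have : ∀ i : Fin n, Measurable (fun x => T x i) := by
    intro i
    have := key (EuclideanSpace.single i 1)
    convert this using 2 with x
    rw [EuclideanSpace.inner_single_right]
    simp
  exact (WithLp.measurable_toLp 2 _).comp (measurable_pi_lambda (fun x => (T x).ofLp) this)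
open scoped RealInnerProductSpace
open MeasureTheory

theorem gauss_int {n : ℕ} (m : ℝ) (hm : 0 < m) (b : EuclideanSpace ℝ (Fin n)) :
    Integrable (fun y : EuclideanSpace ℝ (Fin n) => Real.exp (-m * ‖y - b‖^2)) := by
  have h : Integrable (fun y : EuclideanSpace ℝ (Fin n) => Real.exp (-m * ‖y‖^2)) := by
    have := GaussianFourier.integrable_cexp_neg_mul_sq_norm_add_of_euclideanSpace (ι := Fin n)
      (b := (m:ℂ)) (by simpa using hm) 0 0
    have h2 := this.norm
    apply h2.congr
    filter_upwards with v
    rw [Complex.norm_exp]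
    simp only [zero_mul, add_zero]
    rw [show ((-m:ℂ) * (‖v‖:ℂ)^2) = ((-m * ‖v‖^2 : ℝ) : ℂ) by push_cast; ring, Complex.ofReal_re]
  exact h.comp_sub_right b

theorem eigen_min {n : ℕ} (hn : 0 < n)
    (A : EuclideanSpace ℝ (Fin n) →ₗ[ℝ] EuclideanSpace ℝ (Fin n))
    (hpos : ∀ x, x ≠ 0 → 0 < (⟪A x, x⟫)) :
    ∃ lam : ℝ, 0 < lam ∧ ∀ w, lam * ‖w‖^2 ≤ ⟪A w, w⟫ := by
  haveI : Nonempty (Fin n) := ⟨⟨0, hn⟩⟩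
  have hAc : Continuous A := A.continuous_of_finiteDimensional
  have hsne : (Metric.sphere (0 : EuclideanSpace ℝ (Fin n)) 1).Nonempty := by
    haveI : Nontrivial (EuclideanSpace ℝ (Fin n)) := ⟨⟨EuclideanSpace.single ⟨0, hn⟩ 1, 0, by
      intro h
      have := congrArg (fun w => w ⟨0, hn⟩) h
      simp [EuclideanSpace.single_apply] at this⟩⟩
    exact NormedSpace.sphere_nonempty.mpr zero_le_one
  obtain ⟨u, hu, hmin'⟩ := (isCompact_sphere (0 : EuclideanSpace ℝ (Fin n)) 1).exists_isMinOn
    hsne (Continuous.continuousOn (f := fun x : EuclideanSpace ℝ (Fin n) => (inner ℝ (A x) x : ℝ)) (hAc.inner continuous_id))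
  have hu1 : ‖u‖ = 1 := by simpa using hu
  refine ⟨⟪A u, u⟫, hpos u (by intro h; rw [h] at hu1; simp at hu1), ?_⟩
  intro w
  rcases eq_or_ne w 0 with rfl | hw
  · simp
  · have hwn : ‖w‖ ≠ 0 := norm_ne_zero_iff.mpr hw
    set v := ‖w‖⁻¹ • w with hv
    have hvs : v ∈ Metric.sphere (0 : EuclideanSpace ℝ (Fin n)) 1 := by
      simp [hv, norm_smul, abs_of_nonneg (inv_nonneg.mpr (norm_nonneg w)), inv_mul_cancel₀ hwn]
    have := hmin' hvs
    have hexp : ⟪A v, v⟫ = ‖w‖⁻¹^2 * ⟪A w, w⟫ := by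
      simp [hv, _root_.map_smul, inner_smul_left, inner_smul_right]
      ring
    have hle : (⟪A u, u⟫ : ℝ) ≤ ⟪A v, v⟫ := this
    rw [hexp] at hle
    have h2 : (⟪A u, u⟫ : ℝ) * ‖w‖^2 ≤ ‖w‖⁻¹^2 * ⟪A w, w⟫ * ‖w‖^2 := by
      nlinarith [sq_nonneg (‖w‖)]
    calc (⟪A u, u⟫ : ℝ) * ‖w‖^2 ≤ ‖w‖⁻¹^2 * ⟪A w, w⟫ * ‖w‖^2 := h2
      _ = ⟪A w, w⟫ := by field_simp

theorem stmt16 {n : ℕ} (f g : EuclideanSpace ℝ (Fin n) → ℝ)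
    -- `g` is a Gaussian probability density
    (hgauss : ∃ (A : EuclideanSpace ℝ (Fin n) →ₗ[ℝ] EuclideanSpace ℝ (Fin n))
        (b : EuclideanSpace ℝ (Fin n)) (C : ℝ),
      (∀ x y, (inner ℝ (A x) y : ℝ) = inner ℝ x (A y)) ∧
      (∀ x, x ≠ 0 → 0 < (inner ℝ (A x) x : ℝ)) ∧
      (∀ x, g x = C * Real.exp (-(inner ℝ (A (x - b)) (x - b) : ℝ))))
    (hgprob : ∫ x, g x = 1)
    -- `f` is a positive Hölder-continuous probability density
    (hfpos : ∀ x, 0 < f x) (hfprob : ∫ x, f x = 1)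
    (hHolder : ∃ α : ℝ, 0 < α ∧ α < 1 ∧ ∀ x₀, ∃ U ∈ nhds x₀, ∃ c₀ > (0:ℝ),
      ∀ x ∈ U, ∀ y ∈ U, |f x - f y| ≤ c₀ * ‖x - y‖ ^ α)
    -- domination `f ≤ c • g`
    (c : ℝ) (hc : 0 < c) (hdom : ∀ x, f x ≤ c * g x)
    -- `T` is the Brenier map pushing the measure with density `g` forward
    -- to the measure with density `f`: the gradient of a convex potential
    (T : EuclideanSpace ℝ (Fin n) → EuclideanSpace ℝ (Fin n))
    (φ : EuclideanSpace ℝ (Fin n) → ℝ) (hφ : ConvexOn ℝ Set.univ φ)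
    (hgrad : ∀ x, HasGradientAt φ (T x) x)
    (hpush : Measure.map T (volume.withDensity fun x => ENNReal.ofReal (g x)) =
      volume.withDensity fun x => ENNReal.ofReal (f x)) :
    ∃ C : ℝ, 0 < C ∧ ∀ x, ‖T x‖ ≤ C * Real.sqrt (1 + ‖x‖ ^ 2) := by
  obtain ⟨A, b, C, hsym, hposd, hg⟩ := hgauss
  rcases Nat.eq_zero_or_pos n with hn | hn
  · subst hn
    refine ⟨1, one_pos, fun x => ?_⟩
    have hT0 : T x = 0 := Subsingleton.elim _ _
    rw [hT0, norm_zero, one_mul]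
    positivity
  -- n ≥ 1 : the real argument
  have hTmeas : Measurable T := T_meas φ T hgrad
  have hmono : ∀ x z : EuclideanSpace ℝ (Fin n), (0:ℝ) ≤ ⟪T z - T x, z - x⟫ := fun x z => grad_mono φ hφ T hgrad x z
  have hC : 0 < C := by
    by_contra h
    push_neg at h
    have hgle : ∀ x, g x ≤ 0 := fun x => by
      rw [hg x]
      exact mul_nonpos_of_nonpos_of_nonneg h (Real.exp_pos _).le
    have := integral_nonpos (μ := volume) (f := g) hgle
    rw [hgprob] at this
    linarith
  obtain ⟨lam, hlam, hlam2⟩ := eigen_min hn A hposd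
  set Λ := ‖LinearMap.toContinuousLinearMap A‖ with hΛ
  have hΛ0 : (0:ℝ) ≤ Λ := norm_nonneg _
  have hupper : ∀ w, (⟪A w, w⟫ : ℝ) ≤ Λ * ‖w‖^2 := by
    intro w
    calc (⟪A w, w⟫ : ℝ) ≤ ‖A w‖ * ‖w‖ := real_inner_le_norm _ _
      _ ≤ Λ * ‖w‖ * ‖w‖ := by
          have := (LinearMap.toContinuousLinearMap A).le_opNorm w
          gcongr
          exact this
      _ = Λ * ‖w‖^2 := by ring
  set μ := volume.withDensity fun x : EuclideanSpace ℝ (Fin n) => ENNReal.ofReal (g x) with hμ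
  have hint := gauss_int (lam/2) (by linarith) b
  set I := ∫⁻ y : EuclideanSpace ℝ (Fin n), ENNReal.ofReal (Real.exp (-(lam/2) * ‖y - b‖^2)) with hIdef
  have hIlt : I < ⊤ := hint.lintegral_lt_top
  set V := volume (Metric.ball (0 : EuclideanSpace ℝ (Fin n)) (1/2)) with hVdef
  have hV0 : 0 < V := Metric.measure_ball_pos _ _ (by norm_num)
  have hVlt : V < ⊤ := measure_ball_lt_top
  set d : ℝ := ‖b‖ + 3/2 with hd
  -- the key measure inequality
  have key : ∀ x : EuclideanSpace ℝ (Fin n), 6 * ‖b‖ < ‖T x‖ →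
      ENNReal.ofReal (C * Real.exp (-Λ * (‖x‖ + d)^2)) * V ≤
      ENNReal.ofReal (c * C * Real.exp (-(lam/72) * ‖T x‖^2)) * I := by
    intro x hR
    set R := ‖T x‖ with hRdef
    have hRpos : 0 < R := lt_of_le_of_lt (by positivity) hR
    set e : EuclideanSpace ℝ (Fin n) := R⁻¹ • T x with he
    have hne : ‖e‖ = 1 := by
      rw [he, norm_smul, norm_inv, Real.norm_eq_abs, abs_of_nonneg hRpos.le, inv_mul_cancel₀ hRpos.ne']
    set S : Set (EuclideanSpace ℝ (Fin n)) := {y : EuclideanSpace ℝ (Fin n) | R/3 ≤ ‖y‖} with hSdef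
    have hS : MeasurableSet S := (isClosed_le continuous_const continuous_norm).measurableSet
    have hball_sub : Metric.ball (x + e) (1/2) ⊆ T ⁻¹' S := by
      intro z hz
      rw [Metric.mem_ball, dist_eq_norm] at hz
      have h1 : R / 2 ≤ ⟪T x, z - x⟫ := by
        have hsplit : z - x = e + (z - (x + e)) := by abel
        have hTe : ⟪T x, e⟫ = R := by
          rw [he, real_inner_smul_right, real_inner_self_eq_norm_sq, ← hRdef, sq]
          field_simp
        have habs : |⟪T x, z - (x + e)⟫| ≤ R * ‖z - (x+e)‖ := by
          calc |⟪T x, z - (x + e)⟫| ≤ ‖T x‖ * ‖z - (x+e)‖ := abs_real_inner_le_norm _ _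
            _ = R * ‖z - (x+e)‖ := rfl
        have hb2 : R * ‖z - (x+e)‖ ≤ R * (1/2) := mul_le_mul_of_nonneg_left hz.le hRpos.le
        obtain ⟨hlft, hrgt⟩ := abs_le.mp habs
        rw [hsplit, inner_add_right, hTe]
        linarith
      have h2 : R / 2 ≤ ⟪T z, z - x⟫ := by
        have := hmono x z
        rw [inner_sub_left] at this
        linarith
      have h3 : ‖z - x‖ ≤ 3/2 := by
        have : z - x = (z - (x + e)) + e := by abel
        rw [this]
        calc ‖(z - (x + e)) + e‖ ≤ ‖z - (x+e)‖ + ‖e‖ := norm_add_le _ _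
          _ ≤ 1/2 + 1 := by rw [hne]; linarith
          _ = 3/2 := by norm_num
      have h4 : ⟪T z, z - x⟫ ≤ ‖T z‖ * (3/2) := by
        calc (⟪T z, z - x⟫:ℝ) ≤ ‖T z‖ * ‖z - x‖ := real_inner_le_norm _ _
          _ ≤ ‖T z‖ * (3/2) := by gcongr
      have : R / 3 ≤ ‖T z‖ := by nlinarith
      exact this
    -- lower bound μ(ball) ≥ ofReal m1 * V
    have hlow : ENNReal.ofReal (C * Real.exp (-Λ * (‖x‖ + d)^2)) * V ≤
        μ (Metric.ball (x + e) (1/2)) := by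
      rw [hμ, withDensity_apply _ measurableSet_ball]
      have hpt : ∀ z ∈ Metric.ball (x + e) (1/2),
          ENNReal.ofReal (C * Real.exp (-Λ * (‖x‖ + d)^2)) ≤ ENNReal.ofReal (g z) := by
        intro z hz
        apply ENNReal.ofReal_le_ofReal
        rw [hg z]
        have hzb : ‖z - b‖ ≤ ‖x‖ + d := by
          rw [Metric.mem_ball, dist_eq_norm] at hz
          have : z - b = (z - (x + e)) + e + x - b := by abel
          rw [this]
          calc ‖(z - (x + e)) + e + x - b‖ ≤ ‖(z - (x+e)) + e + x‖ + ‖b‖ := norm_sub_le _ _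
            _ ≤ ‖z - (x+e)‖ + ‖e‖ + ‖x‖ + ‖b‖ := by
                have := norm_add_le ((z - (x+e)) + e) x
                have h2 := norm_add_le (z - (x+e)) e
                linarith
            _ ≤ ‖x‖ + d := by rw [hne, hd]; linarith [hz.le]
        have hAz : (⟪A (z - b), (z - b)⟫:ℝ) ≤ Λ * (‖x‖ + d)^2 := by
          have hsq : ‖z - b‖^2 ≤ (‖x‖ + d)^2 := pow_le_pow_left₀ (norm_nonneg _) hzb 2
          calc (⟪A (z - b), (z - b)⟫:ℝ) ≤ Λ * ‖z - b‖^2 := hupper _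
            _ ≤ Λ * (‖x‖ + d)^2 := mul_le_mul_of_nonneg_left hsq hΛ0
        have hexp2 : Real.exp (-Λ * (‖x‖ + d)^2) ≤ Real.exp (-(⟪A (z - b), (z - b)⟫:ℝ)) := by
          rw [Real.exp_le_exp]; linarith
        exact mul_le_mul_of_nonneg_left hexp2 hC.le
      calc ENNReal.ofReal (C * Real.exp (-Λ * (‖x‖ + d)^2)) * V
          = ∫⁻ _ in Metric.ball (x + e) (1/2), ENNReal.ofReal (C * Real.exp (-Λ * (‖x‖ + d)^2)) := by
            rw [setLIntegral_const, Measure.addHaar_ball_center volume (x+e), hVdef]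
        _ ≤ ∫⁻ z in Metric.ball (x + e) (1/2), ENNReal.ofReal (g z) :=
            setLIntegral_mono' measurableSet_ball hpt
    -- upper bound ν(S) ≤ ofReal m2 * I
    have hup : μ (T ⁻¹' S) ≤ ENNReal.ofReal (c * C * Real.exp (-(lam/72) * R^2)) * I := by
      have hmap : μ (T ⁻¹' S) = (volume.withDensity fun y : EuclideanSpace ℝ (Fin n) => ENNReal.ofReal (f y)) S := by
        rw [← hpush, Measure.map_apply hTmeas hS]
      rw [hmap, withDensity_apply _ hS]
      have hpt : ∀ y ∈ S, ENNReal.ofReal (f y) ≤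
          ENNReal.ofReal (c * C * Real.exp (-(lam/72) * R^2)) *
          ENNReal.ofReal (Real.exp (-(lam/2) * ‖y - b‖^2)) := by
        intro y hy
        rw [← ENNReal.ofReal_mul (by positivity)]
        apply ENNReal.ofReal_le_ofReal
        have hyb : R/6 ≤ ‖y - b‖ := by
          have h1 : R/3 ≤ ‖y‖ := hy
          have h2 : ‖y‖ - ‖b‖ ≤ ‖y - b‖ := by
            have := norm_sub_norm_le y b
            linarith [le_abs_self (‖y‖ - ‖b‖)]
          have hb6 : ‖b‖ ≤ R/6 := by linarith
          linarith
        have hfy : f y ≤ c * (C * Real.exp (-(⟪A (y - b), (y - b)⟫:ℝ))) := by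
          rw [← hg y]; exact hdom y
        have hexp : Real.exp (-(⟪A (y - b), (y - b)⟫:ℝ)) ≤
            Real.exp (-(lam/72) * R^2) * Real.exp (-(lam/2) * ‖y - b‖^2) := by
          rw [← Real.exp_add, Real.exp_le_exp]
          have h1 : lam * ‖y - b‖^2 ≤ (⟪A (y - b), (y - b)⟫:ℝ) := hlam2 _
          have h2 : (R/6)^2 ≤ ‖y - b‖^2 := by
            have := hyb
            nlinarith [norm_nonneg (y - b)]
          nlinarith
        calc f y ≤ c * (C * Real.exp (-(⟪A (y - b), (y - b)⟫:ℝ))) := hfy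
          _ ≤ c * (C * (Real.exp (-(lam/72) * R^2) * Real.exp (-(lam/2) * ‖y - b‖^2))) := by
              gcongr
          _ = c * C * Real.exp (-(lam/72) * R^2) * Real.exp (-(lam/2) * ‖y - b‖^2) := by ring
      calc ∫⁻ y in S, ENNReal.ofReal (f y)
          ≤ ∫⁻ y in S, ENNReal.ofReal (c * C * Real.exp (-(lam/72) * R^2)) *
              ENNReal.ofReal (Real.exp (-(lam/2) * ‖y - b‖^2)) :=
            setLIntegral_mono' hS hpt
        _ ≤ ∫⁻ y, ENNReal.ofReal (c * C * Real.exp (-(lam/72) * R^2)) *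
              ENNReal.ofReal (Real.exp (-(lam/2) * ‖y - b‖^2)) :=
            setLIntegral_le_lintegral _ _
        _ = ENNReal.ofReal (c * C * Real.exp (-(lam/72) * R^2)) * I := by
            rw [hIdef, lintegral_const_mul']
            exact ENNReal.ofReal_ne_top
      -- done
    calc ENNReal.ofReal (C * Real.exp (-Λ * (‖x‖ + d)^2)) * V
        ≤ μ (Metric.ball (x + e) (1/2)) := hlow
      _ ≤ μ (T ⁻¹' S) := measure_mono hball_sub
      _ ≤ ENNReal.ofReal (c * C * Real.exp (-(lam/72) * R^2)) * I := hup
  -- convert to a real inequality and extract growth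
  set Ir := I.toReal with hIr
  set Vr := V.toReal with hVr
  have hVr0 : 0 < Vr := ENNReal.toReal_pos hV0.ne' hVlt.ne
  set L0 : ℝ := Real.log (c * Ir / Vr) with hL0
  set K : ℝ := (72/lam) * (|L0| + Λ * 2 * d^2 + Λ * 2) with hK
  have hK0 : 0 ≤ K := by
    have : (0:ℝ) ≤ |L0| + Λ * 2 * d^2 + Λ * 2 := by positivity
    positivity
  have main : ∀ x : EuclideanSpace ℝ (Fin n), 6 * ‖b‖ < ‖T x‖ → ‖T x‖^2 ≤ K * (1 + ‖x‖^2) := by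
    intro x hx
    have h := key x hx
    -- to reals
    have hreal : C * Real.exp (-Λ * (‖x‖ + d)^2) * Vr ≤
        c * C * Real.exp (-(lam/72) * ‖T x‖^2) * Ir := by
      have hfin : ENNReal.ofReal (c * C * Real.exp (-(lam/72) * ‖T x‖^2)) * I ≠ ⊤ :=
        ENNReal.mul_ne_top ENNReal.ofReal_ne_top hIlt.ne
      have := ENNReal.toReal_mono hfin h
      rw [ENNReal.toReal_mul, ENNReal.toReal_mul, ENNReal.toReal_ofReal (by positivity),
        ENNReal.toReal_ofReal (by positivity)] at this
      exact this
    set R := ‖T x‖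
    set s := ‖x‖ + d with hs
    -- divide by C Vr, take logs
    have hstep : Real.exp ((lam/72) * R^2 - Λ * s^2) ≤ c * Ir / Vr := by
      have hCdiv : Real.exp (-Λ * s ^ 2) * Vr ≤ c * Real.exp (-(lam / 72) * R ^ 2) * Ir := by
        have h' : C * (Real.exp (-Λ * s ^ 2) * Vr) ≤
            C * (c * Real.exp (-(lam / 72) * R ^ 2) * Ir) := by
          calc C * (Real.exp (-Λ * s ^ 2) * Vr) = C * Real.exp (-Λ * s ^ 2) * Vr := by ring
            _ ≤ c * C * Real.exp (-(lam / 72) * R ^ 2) * Ir := hreal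
            _ = C * (c * Real.exp (-(lam / 72) * R ^ 2) * Ir) := by ring
        exact le_of_mul_le_mul_left h' hC
      have hwu : Real.exp ((lam/72) * R^2) * Real.exp (-(lam/72) * R^2) = 1 := by
        rw [← Real.exp_add]
        norm_num
      rw [le_div_iff₀ hVr0]
      calc Real.exp ((lam/72) * R^2 - Λ * s^2) * Vr
          = Real.exp ((lam/72) * R^2) * (Real.exp (-Λ * s^2) * Vr) := by
            rw [show (lam/72) * R^2 - Λ * s^2 = (lam/72) * R^2 + (-Λ * s^2) by ring,
              Real.exp_add]
            ring
        _ ≤ Real.exp ((lam/72) * R^2) * (c * Real.exp (-(lam/72) * R^2) * Ir) :=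
            mul_le_mul_of_nonneg_left hCdiv (Real.exp_nonneg _)
        _ = (Real.exp ((lam/72) * R^2) * Real.exp (-(lam/72) * R^2)) * (c * Ir) := by ring
        _ = c * Ir := by rw [hwu]; ring
    have hlog : (lam/72) * R^2 - Λ * s^2 ≤ L0 := by
      have hpos2 : 0 < c * Ir / Vr := lt_of_lt_of_le (Real.exp_pos _) hstep
      rw [hL0]
      calc (lam/72) * R^2 - Λ * s^2 = Real.log (Real.exp ((lam/72) * R^2 - Λ * s^2)) :=
            (Real.log_exp _).symm
        _ ≤ Real.log (c * Ir / Vr) := Real.log_le_log (Real.exp_pos _) hstep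
    have hs2 : s^2 ≤ 2*‖x‖^2 + 2*d^2 := by
      rw [hs]; nlinarith [sq_nonneg (‖x‖ - d)]
    have hmain2 : (lam/72) * R^2 ≤ |L0| + Λ * (2*‖x‖^2 + 2*d^2) := by
      have hab := le_abs_self L0
      have hprod := mul_le_mul_of_nonneg_left hs2 hΛ0
      calc (lam/72) * R^2 = ((lam/72) * R^2 - Λ * s^2) + Λ * s^2 := by ring
        _ ≤ L0 + Λ * (2*‖x‖^2 + 2*d^2) := add_le_add hlog hprod
        _ ≤ |L0| + Λ * (2*‖x‖^2 + 2*d^2) := add_le_add_left hab _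
    have hRK : R^2 ≤ (72/lam) * (|L0| + Λ * (2*‖x‖^2 + 2*d^2)) := by
      have h72 : (0:ℝ) < 72 / lam := by positivity
      have := mul_le_mul_of_nonneg_left hmain2 h72.le
      calc R^2 = (72/lam) * ((lam/72) * R^2) := by
            field_simp
        _ ≤ (72/lam) * (|L0| + Λ * (2*‖x‖^2 + 2*d^2)) := this
    calc R^2 ≤ (72/lam) * (|L0| + Λ * (2*‖x‖^2 + 2*d^2)) := hRK
      _ = (72/lam) * (|L0| + Λ * 2 * d^2) + (72/lam) * (Λ * 2) * ‖x‖^2 := by ring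
      _ ≤ K * 1 + K * ‖x‖^2 := by
          have h72 : (0:ℝ) ≤ 72/lam := by positivity
          have e1 : 72/lam * (|L0| + Λ * 2 * d^2) ≤ K := by
            rw [hK]
            refine mul_le_mul_of_nonneg_left ?_ h72
            linarith
          have e2 : 72/lam * (Λ * 2) ≤ K := by
            rw [hK]
            refine mul_le_mul_of_nonneg_left ?_ h72
            have h1 := abs_nonneg L0
            have h2 : (0:ℝ) ≤ Λ * 2 * d^2 := by positivity
            linarith
          have e3 := mul_le_mul_of_nonneg_right e2 (sq_nonneg ‖x‖)
          linarith
      _ = K * (1 + ‖x‖^2) := by ring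
  -- final constant
  have hmax0 : (0:ℝ) ≤ max (Real.sqrt K) (6 * ‖b‖) :=
    le_max_of_le_left (Real.sqrt_nonneg K)
  refine ⟨max (Real.sqrt K) (6 * ‖b‖) + 1, by linarith, fun x => ?_⟩
  have hsq1 : (1:ℝ) ≤ Real.sqrt (1 + ‖x‖^2) := by
    have h := Real.sqrt_le_sqrt (show (1:ℝ) ≤ 1 + ‖x‖^2 by nlinarith [sq_nonneg ‖x‖])
    simpa using h
  rcases le_or_gt (‖T x‖) (6 * ‖b‖) with hcase | hcase
  · calc ‖T x‖ ≤ 6 * ‖b‖ := hcase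
      _ ≤ (max (Real.sqrt K) (6 * ‖b‖) + 1) * 1 := by
          have := le_max_right (Real.sqrt K) (6 * ‖b‖)
          linarith
      _ ≤ (max (Real.sqrt K) (6 * ‖b‖) + 1) * Real.sqrt (1 + ‖x‖^2) := by
          exact mul_le_mul_of_nonneg_left hsq1 (by linarith)
  · have h := main x hcase
    have hT2 : ‖T x‖ ≤ Real.sqrt (K * (1 + ‖x‖^2)) := by
      rw [← Real.sqrt_sq (norm_nonneg (T x))]
      exact Real.sqrt_le_sqrt h
    calc ‖T x‖ ≤ Real.sqrt (K * (1 + ‖x‖^2)) := hT2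
      _ = Real.sqrt K * Real.sqrt (1 + ‖x‖^2) := by
          rw [Real.sqrt_mul hK0]
      _ ≤ (max (Real.sqrt K) (6 * ‖b‖) + 1) * Real.sqrt (1 + ‖x‖^2) := by
          refine mul_le_mul_of_nonneg_right ?_ (Real.sqrt_nonneg _)
          have := le_max_left (Real.sqrt K) (6 * ‖b‖)
          linarith
end
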